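/- arXiv:2012.07200 — 8 statements merged into one kernel-verified Lean document; each statement's English description precedes it below -/
import Mathlib

section
/- Let g be a finite-dimensional complex Lie algebra with ind g = 1 and whose center Z(g) is nontrivial. Then dim g is odd and g is contact; moreover there exists a contact form φ ∈ g* that is regular (dim ker B_φ = 1) and satisfies φ(z) ≠ 0 for some nonzero central element z. -/
open Matrix

attribute [local instance 100] LieRing.ofAssociativeRing

/-- A finite poset on `Fin n`, compatible with the natural order on `Fin n`. -/
structure FinPoset (n : ℕ) where
  le : Fin n → Fin n → Prop
  le_refl : ∀ i, le i i
  le_antisymm : ∀ i j, le i j → le j i → i = j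
  le_trans : ∀ i j k, le i j → le j k → le i k
  le_compat : ∀ i j, le i j → i ≤ j

namespace FinPoset

/-- Strict relation of the poset. -/
def lt {n : ℕ} (P : FinPoset n) (i j : Fin n) : Prop := P.le i j ∧ i ≠ j

end FinPoset

/-- The type-A Lie poset algebra: trace-zero matrices supported on the relations of `P`. -/
def gA {n : ℕ} (P : FinPoset n) : LieSubalgebra ℂ (Matrix (Fin n) (Fin n) ℂ) where
  carrier := {M | Matrix.trace M = 0 ∧ ∀ i j, ¬ P.le i j → M i j = 0}
  add_mem' := by
    rintro a b ⟨ha1, ha2⟩ ⟨hb1, hb2⟩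
    exact ⟨by simp [Matrix.trace_add, ha1, hb1],
      fun i j h => by simp [Matrix.add_apply, ha2 i j h, hb2 i j h]⟩
  zero_mem' := ⟨Matrix.trace_zero _ _, fun _ _ _ => rfl⟩
  smul_mem' := by
    rintro c a ⟨ha1, ha2⟩
    exact ⟨by simp [Matrix.trace_smul, ha1],
      fun i j h => by simp [Matrix.smul_apply, ha2 i j h]⟩
  lie_mem' := by
    rintro a b ⟨ha1, ha2⟩ ⟨hb1, hb2⟩
    refine ⟨by simp [Ring.lie_def, Matrix.trace_sub, Matrix.trace_mul_comm a b], ?_⟩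
    intro i j h
    simp only [Ring.lie_def, Matrix.sub_apply, Matrix.mul_apply]
    rw [Finset.sum_eq_zero, Finset.sum_eq_zero, sub_zero]
    · intro k _
      by_cases hbk : P.le i k
      · have : ¬ P.le k j := fun hkj => h (P.le_trans i k j hbk hkj)
        simp [ha2 k j this]
      · simp [hb2 i k hbk]
    · intro k _
      by_cases hak : P.le i k
      · have : ¬ P.le k j := fun hkj => h (P.le_trans i k j hak hkj)
        simp [hb2 k j this]
      · simp [ha2 i k hak]

/-- The extended skew-symmetric matrix `\widehat{B}_φ` attached to an ordered
basis-like family `E` and a functional `φ`. -/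
def hatB {g : Type*} [LieRing g] [LieAlgebra ℂ g] {m : ℕ}
    (E : Fin m → g) (φ : Module.Dual ℂ g) : Matrix (Fin (m + 1)) (Fin (m + 1)) ℂ :=
  Matrix.of fun i j =>
    Fin.cases
      (Fin.cases 0 (fun j' => φ (E j')) j)
      (fun i' => Fin.cases (-(φ (E i'))) (fun j' => φ ⁅E i', E j'⁆) j)
      i

/-- `φ` is a contact form on `g`: `g` has odd dimension `2k+1` and the matrix
`\widehat{B}_φ` with respect to a basis is nonsingular. -/
def IsContactForm (g : Type*) [LieRing g] [LieAlgebra ℂ g] (φ : Module.Dual ℂ g) : Prop :=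
  ∃ (k : ℕ) (E : Module.Basis (Fin (2 * k + 1)) ℂ g), (hatB (⇑E) φ).det ≠ 0

/-- `g` is a contact Lie algebra. -/
def IsContact (g : Type*) [LieRing g] [LieAlgebra ℂ g] : Prop :=
  ∃ φ : Module.Dual ℂ g, IsContactForm g φ

/-- The kernel of the Kirillov form `B_φ(x,y) = φ⁅x,y⁆`. -/
def kerB {g : Type*} [LieRing g] [LieAlgebra ℂ g] (φ : Module.Dual ℂ g) : Submodule ℂ g where
  carrier := {x | ∀ y, φ ⁅x, y⁆ = 0}
  add_mem' := by intro a b ha hb; intro y; simp [add_lie, ha y, hb y]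
  zero_mem' := by intro y; simp
  smul_mem' := by intro c x hx; intro y; simp [smul_lie, hx y]

/-- The index of a Lie algebra: the minimal dimension of `ker B_φ`. -/
noncomputable def lieIndex (g : Type*) [LieRing g] [LieAlgebra ℂ g] : ℕ :=
  sInf {d | ∃ φ : Module.Dual ℂ g, Module.finrank ℂ (kerB φ) = d}

/-- The Hasse diagram of `P` as a simple graph on `Fin n`. -/
def hasse {n : ℕ} (P : FinPoset n) : SimpleGraph (Fin n) :=
  SimpleGraph.fromRel (fun i j => P.lt i j ∧ ∀ k, ¬ (P.lt i k ∧ P.lt k j))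

/-- The Hasse diagram of the subposet of `P` induced on `S`. -/
def hasseOn {n : ℕ} (P : FinPoset n) (S : Set (Fin n)) : SimpleGraph S :=
  SimpleGraph.fromRel (fun i j => P.lt i j ∧ ∀ k : S, ¬ (P.lt i k ∧ P.lt k j))

/-- The set of extremal (minimal or maximal) elements of `P`. -/
def extSet {n : ℕ} (P : FinPoset n) : Set (Fin n) :=
  {i | (∀ j, ¬ P.lt j i) ∨ (∀ j, ¬ P.lt i j)}

/-- The extremal elements of the subposet of `P` induced on `S`. -/
def extIn {n : ℕ} (P : FinPoset n) (S : Set (Fin n)) : Set (Fin n) :=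
  {i | i ∈ S ∧ ((∀ j ∈ S, ¬ P.lt j i) ∨ (∀ j ∈ S, ¬ P.lt i j))}

/-- The set of elements comparable to `i` (underlying set of `P^i`). -/
def cone {n : ℕ} (P : FinPoset n) (i : Fin n) : Set (Fin n) :=
  {j | P.le j i ∨ P.le i j}

/-- `D(P,i)`: the number of elements strictly below `i`. -/
noncomputable def downDeg {n : ℕ} (P : FinPoset n) (i : Fin n) : ℕ :=
  Set.ncard {j | P.lt j i}

/-- `U(P,i)`: the number of elements strictly above `i`. -/
noncomputable def upDeg {n : ℕ} (P : FinPoset n) (i : Fin n) : ℕ :=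
  Set.ncard {j | P.lt i j}

/-- `P` has a chain of cardinality `m`. -/
def hasChain {n : ℕ} (P : FinPoset n) (m : ℕ) : Prop :=
  ∃ s : Finset (Fin n), s.card = m ∧ ∀ i ∈ s, ∀ j ∈ s, P.le i j ∨ P.le j i

/-- `P` has height exactly `h`: it has a chain of cardinality `h+1` but none of
cardinality `h+2`. -/
def heightEq {n : ℕ} (P : FinPoset n) (h : ℕ) : Prop :=
  hasChain P (h + 1) ∧ ¬ hasChain P (h + 2)
section AuxLemmas

open Polynomial

variable {g : Type} [LieRing g] [LieAlgebra ℂ g]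

lemma mem_kerB {φ : Module.Dual ℂ g} {x : g} : x ∈ kerB φ ↔ ∀ y, φ ⁅x, y⁆ = 0 :=
  Iff.rfl

/-- The bordered bilinear form on `ℂ × g` with border functional `ψ` and interior `φ`. -/
noncomputable def bForm (φ ψ : Module.Dual ℂ g) : LinearMap.BilinForm ℂ (ℂ × g) :=
  LinearMap.mk₂ ℂ (fun p q => p.1 * ψ q.2 - q.1 * ψ p.2 + φ ⁅p.2, q.2⁆)
    (by intro m₁ m₂ n; simp [add_lie]; ring)
    (by intro c m n; simp [smul_lie, smul_eq_mul]; ring)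
    (by intro m n₁ n₂; simp [lie_add]; ring)
    (by intro c m n; simp [lie_smul, smul_eq_mul]; ring)

@[simp] lemma bForm_apply (φ ψ : Module.Dual ℂ g) (p q : ℂ × g) :
    bForm φ ψ p q = p.1 * ψ q.2 - q.1 * ψ p.2 + φ ⁅p.2, q.2⁆ := rfl

/-- The interior-only bilinear form on `ℂ × g`. -/
noncomputable def kForm (ψ : Module.Dual ℂ g) : LinearMap.BilinForm ℂ (ℂ × g) :=
  LinearMap.mk₂ ℂ (fun p q => ψ ⁅p.2, q.2⁆)
    (by intro m₁ m₂ n; simp [add_lie])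
    (by intro c m n; simp [smul_lie, smul_eq_mul])
    (by intro m n₁ n₂; simp [lie_add])
    (by intro c m n; simp [lie_smul, smul_eq_mul])

@[simp] lemma kForm_apply (ψ : Module.Dual ℂ g) (p q : ℂ × g) :
    kForm ψ p q = ψ ⁅p.2, q.2⁆ := rfl

lemma bForm_skew (φ ψ : Module.Dual ℂ g) (p q : ℂ × g) :
    bForm φ ψ q p = -(bForm φ ψ p q) := by
  simp only [bForm_apply, ← lie_skew p.2 q.2, map_neg]
  ring

lemma central_mem_kerB {z : g} (hzc : ∀ y : g, ⁅z, y⁆ = 0) (φ : Module.Dual ℂ g) :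
    z ∈ kerB φ := fun y => by rw [hzc y, map_zero]

lemma bForm_nondeg {z : g} (hz0 : z ≠ 0) (hzc : ∀ y : g, ⁅z, y⁆ = 0)
    {φ ψ : Module.Dual ℂ g} (hker : kerB φ = Submodule.span ℂ {z}) (hψ : ψ z ≠ 0) :
    (bForm φ ψ).Nondegenerate := by
  refine (show (bForm φ ψ).IsRefl from fun p q h => by
    rw [bForm_skew, h, neg_zero]).nondegenerate_iff_separatingLeft.mpr ?_
  rintro ⟨a, x⟩ hp
  have hxz : ⁅x, z⁆ = 0 := by rw [← neg_eq_zero, ← lie_skew, hzc x]; simp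
  have h1 : ψ x = 0 := by
    have h := hp ((1 : ℂ), (0 : g))
    simp only [bForm_apply, map_zero, lie_zero] at h
    linear_combination -h
  have h2 : a = 0 := by
    have h := hp ((0 : ℂ), z)
    simp only [bForm_apply, hxz, map_zero] at h
    have h'' : a * ψ z = 0 := by linear_combination h
    rcases mul_eq_zero.mp h'' with h' | h'
    · exact h'
    · exact absurd h' hψ
  have h3 : x ∈ kerB φ := by
    intro y
    have h := hp ((0 : ℂ), y)
    simp only [bForm_apply, h2] at h
    linear_combination h
  rw [hker, Submodule.mem_span_singleton] at h3
  obtain ⟨c, rfl⟩ := h3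
  have h1' : c * ψ z = 0 := by
    have hcz : ψ (c • z) = c * ψ z := by simp
    rw [hcz] at h1
    exact h1
  have hc : c = 0 := by
    rcases mul_eq_zero.mp h1' with h' | h'
    · exact h'
    · exact absurd h' hψ
  simp [h2, hc]

lemma kerB_eq_span {z : g} (hzc : ∀ y : g, ⁅z, y⁆ = 0)
    {φ ψ : Module.Dual ℂ g} (hψ : ψ z = 1) (hnd : (bForm φ ψ).Nondegenerate) :
    kerB φ = Submodule.span ℂ {z} := by
  apply le_antisymm
  · intro x hx
    set x' : g := x - ψ x • z with hx'def
    have hx'ker : x' ∈ kerB φ := by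
      exact sub_mem hx (Submodule.smul_mem _ _ (central_mem_kerB hzc φ))
    have hψx' : ψ x' = 0 := by
      simp [hx'def, hψ]
    have hzero : ((0 : ℂ), x') = 0 := by
      apply hnd.1
      rintro ⟨b, y⟩
      simp [hψx', hx'ker y]
    have : x' = 0 := congrArg Prod.snd hzero
    have : x = ψ x • z := by
      have := sub_eq_zero.mp this
      simpa [hx'def] using this
    rw [this]
    exact Submodule.smul_mem _ _ (Submodule.mem_span_singleton_self z)
  · rw [Submodule.span_le, Set.singleton_subset_iff]
    exact central_mem_kerB hzc φ

/-- The equivalence `Fin (m+1) ≃ Unit ⊕ Fin m` sending `0` to the `Unit` summand. -/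
def finSuccEquivSum (m : ℕ) : Fin (m + 1) ≃ Unit ⊕ Fin m where
  toFun := Fin.cases (Sum.inl ()) Sum.inr
  invFun := Sum.elim (fun _ => 0) Fin.succ
  left_inv i := by cases i using Fin.cases <;> simp
  right_inv s := by rcases s with _ | j <;> simp

end AuxLemmas

/-- A finite-dimensional complex Lie algebra of index one with
nontrivial center has odd dimension and is contact; moreover there is a regular
contact form which is nonzero on some nonzero central element. -/
theorem stmt0 (g : Type) [LieRing g] [LieAlgebra ℂ g] [Module.Finite ℂ g]
    (hind : lieIndex g = 1)
    (hZ : ∃ z : g, z ≠ 0 ∧ ∀ y : g, ⁅z, y⁆ = 0) :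
    Odd (Module.finrank ℂ g) ∧ IsContact g ∧
      ∃ (k : ℕ) (E : Module.Basis (Fin (2 * k + 1)) ℂ g) (φ : Module.Dual ℂ g),
        (hatB (⇑E) φ).det ≠ 0 ∧ Module.finrank ℂ (kerB φ) = 1 ∧
          ∃ z : g, z ≠ 0 ∧ (∀ y : g, ⁅z, y⁆ = 0) ∧ φ z ≠ 0 := by
    classical
  obtain ⟨z, hz0, hzc⟩ := hZ
  obtain ⟨ψ0, hψ0⟩ : ∃ ψ : Module.Dual ℂ g, ψ z ≠ 0 := by
    by_contra h
    push_neg at h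
    exact hz0 ((Module.forall_dual_apply_eq_zero_iff ℂ z).mp h)
  set ψ : Module.Dual ℂ g := (ψ0 z)⁻¹ • ψ0 with hψdef
  have hψz : ψ z = 1 := by
    simp [hψdef, inv_mul_cancel₀ hψ0]
  have h1mem : (1 : ℕ) ∈ {d | ∃ φ : Module.Dual ℂ g, Module.finrank ℂ (kerB φ) = d} := by
    rw [← hind]
    exact Nat.sInf_mem ⟨_, 0, rfl⟩
  obtain ⟨φ0, hφ0⟩ := h1mem
  have hker0 : kerB φ0 = Submodule.span ℂ {z} := by
    refine (Submodule.eq_of_le_of_finrank_le ?_ ?_).symm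
    · rw [Submodule.span_le, Set.singleton_subset_iff]
      exact central_mem_kerB hzc φ0
    · rw [hφ0, finrank_span_singleton hz0]
  have hnd0 : (bForm φ0 ψ).Nondegenerate :=
    bForm_nondeg hz0 hzc hker0 (by rw [hψz]; exact one_ne_zero)
  set n := Module.finrank ℂ g with hn
  let b0 : Module.Basis (Fin n) ℂ g := Module.finBasis ℂ g
  let bb : Module.Basis (Unit ⊕ Fin n) ℂ (ℂ × g) := (Module.Basis.singleton Unit ℂ).prod b0
  set A := LinearMap.BilinForm.toMatrix bb (bForm φ0 ψ) with hA
  set Cm := LinearMap.BilinForm.toMatrix bb (kForm ψ) with hC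
  have hAdet : A.det ≠ 0 := by
    rw [hA]
    exact (LinearMap.BilinForm.nondegenerate_iff_det_ne_zero bb).mp hnd0
  set P : Matrix (Unit ⊕ Fin n) (Unit ⊕ Fin n) (Polynomial ℂ) :=
    Matrix.of fun i j => Polynomial.C (A i j) + Polynomial.X * Polynomial.C (Cm i j) with hP
  have hPmap : ∀ t : ℂ, P.map (Polynomial.evalRingHom t) = A + t • Cm := by
    intro t
    ext i j
    rw [hP]
    simp only [Matrix.map_apply, Matrix.of_apply, Polynomial.coe_evalRingHom,
      Polynomial.eval_add, Polynomial.eval_mul, Polynomial.eval_C, Polynomial.eval_X,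
      Matrix.add_apply, Matrix.smul_apply, smul_eq_mul]
    try ring
  have hPev : ∀ t : ℂ, (P.det).eval t = (A + t • Cm).det := by
    intro t
    have h := RingHom.map_det (Polynomial.evalRingHom t) P
    rw [RingHom.mapMatrix_apply, hPmap t] at h
    simpa using h
  have hPne : P.det ≠ 0 := by
    intro h
    apply hAdet
    have h0 := hPev 0
    rw [h] at h0
    simpa using h0.symm
  obtain ⟨t, ht⟩ : ∃ t : ℂ, t ∉ ({x | (P.det).IsRoot x} ∪ {-(φ0 z)} : Set ℂ) := by
    have hfin : ({x | (P.det).IsRoot x} ∪ {-(φ0 z)} : Set ℂ).Finite :=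
      (Polynomial.finite_setOf_isRoot hPne).union (Set.finite_singleton _)
    obtain ⟨t, ht⟩ := hfin.infinite_compl.nonempty
    exact ⟨t, ht⟩
  rw [Set.mem_union, not_or] at ht
  obtain ⟨htroot, htz⟩ := ht
  set φt : Module.Dual ℂ g := φ0 + t • ψ with hφt
  have hMt : LinearMap.BilinForm.toMatrix bb (bForm φt ψ) = A + t • Cm := by
    ext i j
    rw [hA, hC]
    simp only [Matrix.add_apply, Matrix.smul_apply, LinearMap.BilinForm.toMatrix_apply, bForm_apply,
      kForm_apply, hφt, LinearMap.add_apply, LinearMap.smul_apply, smul_eq_mul]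
    ring
  have hMtdet : (LinearMap.BilinForm.toMatrix bb (bForm φt ψ)).det ≠ 0 := by
    rw [hMt, ← hPev t]
    exact htroot
  have hndt : (bForm φt ψ).Nondegenerate :=
    (LinearMap.BilinForm.nondegenerate_iff_det_ne_zero bb).mpr hMtdet
  have hkert : kerB φt = Submodule.span ℂ {z} := kerB_eq_span hzc hψz hndt
  have hfrt : Module.finrank ℂ (kerB φt) = 1 := by
    rw [hkert, finrank_span_singleton hz0]
  have hφtz : φt z ≠ 0 := by
    have hv : φt z = φ0 z + t := by
      simp [hφt, hψz]
    rw [hv]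
    intro h
    exact htz (Set.mem_singleton_iff.mpr (by linear_combination h))
  have hodd : Odd n := by
    rw [← Nat.not_even_iff_odd]
    intro hev
    apply hMtdet
    set M := LinearMap.BilinForm.toMatrix bb (bForm φt ψ) with hM
    have hskew : Mᵀ = -M := by
      ext i j
      rw [hM]
      simp only [Matrix.transpose_apply, Matrix.neg_apply, LinearMap.BilinForm.toMatrix_apply]
      exact bForm_skew _ _ _ _
    have hcard : Fintype.card (Unit ⊕ Fin n) = 1 + n := by simp
    have hoddc : Odd (1 + n) := by
      rw [add_comm]
      exact hev.add_one
    have hd : M.det = -M.det := by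
      conv_lhs => rw [← Matrix.det_transpose, hskew]
      rw [Matrix.det_neg, hcard, hoddc.neg_one_pow]
      ring
    exact add_self_eq_zero.mp (by linear_combination hd)
  obtain ⟨k, hk⟩ := hodd
  let E : Module.Basis (Fin (2 * k + 1)) ℂ g := b0.reindex (finCongr hk)
  let bE : Module.Basis (Unit ⊕ Fin (2 * k + 1)) ℂ (ℂ × g) := (Module.Basis.singleton Unit ℂ).prod E
  have hndE : (bForm φt φt).Nondegenerate := bForm_nondeg hz0 hzc hkert hφtz
  have hdetE : (LinearMap.BilinForm.toMatrix bE (bForm φt φt)).det ≠ 0 :=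
    (LinearMap.BilinForm.nondegenerate_iff_det_ne_zero bE).mp hndE
  have hhat : hatB (⇑E) φt = (LinearMap.BilinForm.toMatrix bE (bForm φt φt)).submatrix
      (finSuccEquivSum _) (finSuccEquivSum _) := by
    ext i j
    refine Fin.cases ?_ (fun i' => ?_) i <;> refine Fin.cases ?_ (fun j' => ?_) j <;>
      simp [hatB, finSuccEquivSum, bE, Module.Basis.prod_apply, Module.Basis.singleton_apply]
  have hhatdet : (hatB (⇑E) φt).det ≠ 0 := by
    rw [hhat, Matrix.det_submatrix_equiv_self]
    exact hdetE
  exact ⟨⟨k, hk⟩, ⟨φt, k, E, hhatdet⟩, k, E, φt, hhatdet, hfrt, z, hz0, hzc, hφtz⟩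
end

section
/- Let P be a finite poset. If the Hasse diagram of the induced subposet P_{Ext(P)} contains a cycle (i.e., is not a forest as a simple graph), then the type-A Lie poset algebra g_A(P) is not contact. -/
open Matrix

attribute [local instance 100] LieRing.ofAssociativeRing

section Aux

variable {n : ℕ} (P : FinPoset n)

/-- Standard matrix unit. -/
def eMat (a b : Fin n) : Matrix (Fin n) (Fin n) ℂ := Matrix.single a b (1 : ℂ)

lemma eMat_apply (a b i j : Fin n) :
    eMat a b i j = if a = i ∧ b = j then (1 : ℂ) else 0 := rfl

lemma eMat_mem {a b : Fin n} (h : P.lt a b) : eMat a b ∈ gA P := by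
  constructor
  · have hne : a ≠ b := h.2
    simp only [Matrix.trace, Matrix.diag]
    rw [Finset.sum_eq_zero]
    intro i _
    rw [eMat_apply, if_neg]
    rintro ⟨rfl, rfl⟩
    exact hne rfl
  · intro i j hij
    rw [eMat_apply, if_neg]
    rintro ⟨rfl, rfl⟩
    exact hij h.1

/-- The key bracket computation: for `a` minimal and `b` maximal, the matrix unit
`E_{ab}` is a common eigenvector for all of `gA P`. -/
lemma bracket_eMat {a b : Fin n} (hmin : ∀ j, ¬ P.lt j a) (hmax : ∀ j, ¬ P.lt b j)
    {Y : Matrix (Fin n) (Fin n) ℂ} (hY : Y ∈ gA P) :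
    eMat a b * Y - Y * eMat a b = (Y b b - Y a a) • eMat a b := by
  have hYb : ∀ j, j ≠ b → Y b j = 0 := fun j hj =>
    hY.2 b j (fun hle => hmax j ⟨hle, fun e => hj e.symm⟩)
  have hYa : ∀ i, i ≠ a → Y i a = 0 := fun i hi =>
    hY.2 i a (fun hle => hmin i ⟨hle, hi⟩)
  have h1 : ∀ i j, (eMat a b * Y) i j = if a = i ∧ b = j then Y b b else 0 := by
    intro i j
    rw [Matrix.mul_apply]
    by_cases hia : a = i
    · subst hia
      rw [Finset.sum_eq_single b]
      · by_cases hjb : b = j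
        · subst hjb; simp [eMat_apply]
        · rw [hYb j fun e => hjb e.symm, mul_zero, if_neg (fun h => hjb h.2)]
      · intro k _ hk
        rw [eMat_apply, if_neg (by rintro ⟨-, rfl⟩; exact hk rfl), zero_mul]
      · simp
    · rw [if_neg (fun h => hia h.1), Finset.sum_eq_zero]
      intro k _
      rw [eMat_apply, if_neg (by rintro ⟨rfl, -⟩; exact hia rfl), zero_mul]
  have h2 : ∀ i j, (Y * eMat a b) i j = if a = i ∧ b = j then Y a a else 0 := by
    intro i j
    rw [Matrix.mul_apply]
    by_cases hjb : b = j
    · subst hjb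
      rw [Finset.sum_eq_single a]
      · by_cases hia : a = i
        · subst hia; simp [eMat_apply]
        · rw [hYa i fun e => hia e.symm, zero_mul, if_neg (fun h => hia h.1)]
      · intro k _ hk
        rw [eMat_apply, if_neg (by rintro ⟨rfl, -⟩; exact hk rfl), mul_zero]
      · simp
    · rw [if_neg (fun h => hjb h.2), Finset.sum_eq_zero]
      intro k _
      rw [eMat_apply, if_neg (by rintro ⟨-, rfl⟩; exact hjb rfl), mul_zero]
  ext i j
  rw [Matrix.sub_apply, h1, h2, Matrix.smul_apply, eMat_apply, smul_eq_mul]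
  by_cases h : a = i ∧ b = j
  · simp [h]
  · simp [h]

end Aux

section Darts

open Classical in
/-- Bottom endpoint of a dart of the Hasse diagram on the extremal elements. -/
noncomputable def dbot {n : ℕ} (P : FinPoset n)
    (d : (hasseOn P (extSet P)).Dart) : Fin n :=
  if P.lt ↑d.fst ↑d.snd then ↑d.fst else ↑d.snd

open Classical in
/-- Top endpoint of a dart of the Hasse diagram on the extremal elements. -/
noncomputable def dtop {n : ℕ} (P : FinPoset n)
    (d : (hasseOn P (extSet P)).Dart) : Fin n :=
  if P.lt ↑d.fst ↑d.snd then ↑d.snd else ↑d.fst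

variable {n : ℕ} {P : FinPoset n}

lemma dart_lt_or (d : (hasseOn P (extSet P)).Dart) :
    P.lt ↑d.fst ↑d.snd ∨ P.lt ↑d.snd ↑d.fst := by
  have h := d.adj
  unfold hasseOn at h
  rw [SimpleGraph.fromRel_adj] at h
  rcases h.2 with h' | h'
  · exact Or.inl h'.1
  · exact Or.inr h'.1

lemma dart_cases (d : (hasseOn P (extSet P)).Dart) :
    (dbot P d = ↑d.fst ∧ dtop P d = ↑d.snd ∧ P.lt ↑d.fst ↑d.snd) ∨
    (dbot P d = ↑d.snd ∧ dtop P d = ↑d.fst ∧ P.lt ↑d.snd ↑d.fst) := by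
  rcases dart_lt_or d with h | h
  · exact Or.inl ⟨by simp [dbot, h], by simp [dtop, h], h⟩
  · have h' : ¬ P.lt ↑d.fst ↑d.snd := by
      intro h''
      exact h''.2 (P.le_antisymm _ _ h''.1 h.1)
    exact Or.inr ⟨by simp [dbot, h'], by simp [dtop, h'], h⟩

lemma dart_lt (d : (hasseOn P (extSet P)).Dart) : P.lt (dbot P d) (dtop P d) := by
  rcases dart_cases d with ⟨h1, h2, h3⟩ | ⟨h1, h2, h3⟩ <;> rw [h1, h2] <;> exact h3

lemma dbot_min (d : (hasseOn P (extSet P)).Dart) : ∀ j, ¬ P.lt j (dbot P d) := by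
  have hmem : dbot P d ∈ extSet P := by
    rcases dart_cases d with ⟨h1, -, -⟩ | ⟨h1, -, -⟩ <;> rw [h1]
    · exact d.fst.2
    · exact d.snd.2
  rcases hmem with h | h
  · exact h
  · exact absurd (dart_lt d) (h _)

lemma dtop_max (d : (hasseOn P (extSet P)).Dart) : ∀ j, ¬ P.lt (dtop P d) j := by
  have hmem : dtop P d ∈ extSet P := by
    rcases dart_cases d with ⟨-, h2, -⟩ | ⟨-, h2, -⟩ <;> rw [h2]
    · exact d.snd.2
    · exact d.fst.2
  rcases hmem with h | h
  · exact absurd (dart_lt d) (h _)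
  · exact h

open Classical in
/-- Level function: `1` on non-minimal elements, `0` on minimal ones. -/
noncomputable def lvl {n : ℕ} (P : FinPoset n) (v : Fin n) : ℂ :=
  if ∃ j, P.lt j v then 1 else 0

lemma lvl_dbot (d : (hasseOn P (extSet P)).Dart) : lvl P (dbot P d) = 0 := by
  rw [lvl, if_neg]
  rintro ⟨j, hj⟩
  exact dbot_min d j hj

lemma lvl_dtop (d : (hasseOn P (extSet P)).Dart) : lvl P (dtop P d) = 1 := by
  rw [lvl, if_pos ⟨dbot P d, dart_lt d⟩]

/-- The orientation sign of a dart, as a difference of levels. -/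
lemma lvl_diff_ne_zero (d : (hasseOn P (extSet P)).Dart) :
    lvl P ↑d.snd - lvl P ↑d.fst ≠ 0 := by
  rcases dart_cases d with ⟨h1, h2, -⟩ | ⟨h1, h2, -⟩
  · rw [← h1, ← h2, lvl_dbot, lvl_dtop]; norm_num
  · rw [← h1, ← h2, lvl_dbot, lvl_dtop]; norm_num

lemma lvl_mul_diff (d : (hasseOn P (extSet P)).Dart) (f : Fin n → ℂ) :
    (lvl P ↑d.snd - lvl P ↑d.fst) * (f (dtop P d) - f (dbot P d))
      = f ↑d.snd - f ↑d.fst := by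
  rcases dart_cases d with ⟨h1, h2, -⟩ | ⟨h1, h2, -⟩
  · have l1 : lvl P ↑d.fst = 0 := h1 ▸ lvl_dbot d
    have l2 : lvl P ↑d.snd = 1 := h2 ▸ lvl_dtop d
    rw [h1, h2, l1, l2]; ring
  · have l1 : lvl P ↑d.snd = 0 := h1 ▸ lvl_dbot d
    have l2 : lvl P ↑d.fst = 1 := h2 ▸ lvl_dtop d
    rw [h1, h2, l1, l2]; ring

/-- Telescoping sums over the darts of a walk. -/
lemma telescope {V : Type*} {G : SimpleGraph V} (g : V → ℂ) :
    ∀ {u v : V} (p : G.Walk u v),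
      (p.darts.map (fun d => g d.snd - g d.fst)).sum = g v - g u := by
  intro u v p
  induction p with
  | nil => simp
  | cons h q ih => simp [ih]

end Darts

section KerElt

variable {n : ℕ} {P : FinPoset n}

/-- Telescoping, congruence form. -/
lemma telescope' {V : Type*} {G : SimpleGraph V} (g : V → ℂ) {u v : V} (p : G.Walk u v)
    (f : G.Dart → ℂ) (hf : ∀ d ∈ p.darts, f d = g d.snd - g d.fst) :
    (p.darts.map f).sum = g v - g u := by
  rw [List.map_congr_left hf]
  exact telescope g p

/-- The matrix unit of a dart, as an element of `gA P`. -/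
noncomputable def eElt (P : FinPoset n) (d : (hasseOn P (extSet P)).Dart) : ↥(gA P) :=
  ⟨eMat (dbot P d) (dtop P d), eMat_mem P (dart_lt d)⟩

lemma bracket_eElt (d : (hasseOn P (extSet P)).Dart) (y : ↥(gA P)) :
    ⁅eElt P d, y⁆ =
      ((y : Matrix (Fin n) (Fin n) ℂ) (dtop P d) (dtop P d)
        - (y : Matrix (Fin n) (Fin n) ℂ) (dbot P d) (dbot P d)) • eElt P d := by
  apply Subtype.ext
  rw [LieSubalgebra.coe_bracket]
  show ⁅eMat (dbot P d) (dtop P d), (y : Matrix (Fin n) (Fin n) ℂ)⁆ = _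
  rw [Ring.lie_def]
  rw [bracket_eMat P (dbot_min d) (dtop_max d) y.2]
  rfl

/-- The Kirillov-form pairing against `y`, as a linear functional. -/
noncomputable def psi (φ : Module.Dual ℂ ↥(gA P)) (y : ↥(gA P)) : ↥(gA P) →ₗ[ℂ] ℂ where
  toFun x := φ ⁅x, y⁆
  map_add' a b := by show φ ⁅a + b, y⁆ = φ ⁅a, y⁆ + φ ⁅b, y⁆; rw [add_lie, map_add]
  map_smul' c a := by show φ ⁅c • a, y⁆ = c • φ ⁅a, y⁆; rw [smul_lie, _root_.map_smul]

lemma sum_entry (l : List (hasseOn P (extSet P)).Dart)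
    (cf : (hasseOn P (extSet P)).Dart → ℂ) (i j : Fin n) :
    (((l.map fun d => cf d • eElt P d).sum : ↥(gA P)) : Matrix (Fin n) (Fin n) ℂ) i j
      = (l.map fun d =>
          cf d * (if dbot P d = i ∧ dtop P d = j then (1 : ℂ) else 0)).sum := by
  induction l with
  | nil => rfl
  | cons a t ih =>
    simp only [List.map_cons, List.sum_cons]
    have hcoe : (((cf a • eElt P a + (t.map fun d => cf d • eElt P d).sum : ↥(gA P)))
        : Matrix (Fin n) (Fin n) ℂ) i j
        = cf a * eMat (dbot P a) (dtop P a) i j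
          + (((t.map fun d => cf d • eElt P d).sum : ↥(gA P))
              : Matrix (Fin n) (Fin n) ℂ) i j := by
      rfl
    rw [hcoe, ih, eMat_apply]

lemma dart_edge_eq (d d' : (hasseOn P (extSet P)).Dart)
    (hb : dbot P d = dbot P d') (ht : dtop P d = dtop P d') : d.edge = d'.edge := by
  have key : ∀ e : (hasseOn P (extSet P)).Dart,
      e.edge = Sym2.mk (⟨dbot P e, by
        rcases dart_cases e with ⟨h1, -, -⟩ | ⟨h1, -, -⟩
        · exact h1 ▸ e.fst.2
        · exact h1 ▸ e.snd.2⟩ : extSet P)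
      (⟨dtop P e, by
        rcases dart_cases e with ⟨-, h2, -⟩ | ⟨-, h2, -⟩
        · exact h2 ▸ e.snd.2
        · exact h2 ▸ e.fst.2⟩ : extSet P) := by
    intro e
    rcases dart_cases e with ⟨h1, h2, -⟩ | ⟨h1, h2, -⟩
    · show Sym2.mk e.fst e.snd = _
      congr 1
      exacts [Subtype.ext h1.symm, Subtype.ext h2.symm]
    · show Sym2.mk e.fst e.snd = _
      rw [Sym2.eq_swap]
      congr 1
      exacts [Subtype.ext h1.symm, Subtype.ext h2.symm]
  rw [key d, key d']
  simp [hb, ht]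

lemma exists_ker (hcyc : ¬ (hasseOn P (extSet P)).IsAcyclic)
    (φ : Module.Dual ℂ ↥(gA P)) :
    ∃ x : ↥(gA P), x ≠ 0 ∧ φ x = 0 ∧ ∀ y, φ ⁅x, y⁆ = 0 := by
  simp only [SimpleGraph.IsAcyclic, not_forall, not_not] at hcyc
  obtain ⟨v, c, hc⟩ := hcyc
  by_cases hA : ∃ d ∈ c.darts, φ (eElt P d) = 0
  · obtain ⟨d, -, hd⟩ := hA
    refine ⟨eElt P d, ?_, hd, ?_⟩
    · intro h0
      have h1 := congrArg
        (fun z : ↥(gA P) => (z : Matrix (Fin n) (Fin n) ℂ) (dbot P d) (dtop P d)) h0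
      simp only [eElt, eMat_apply] at h1
      simp at h1
    · intro y
      rw [bracket_eElt, _root_.map_smul, hd]
      simp
  · push_neg at hA
    classical
    set cf : (hasseOn P (extSet P)).Dart → ℂ :=
      fun d => (lvl P ↑d.snd - lvl P ↑d.fst) / φ (eElt P d) with hcf
    set x : ↥(gA P) := (c.darts.map fun d => cf d • eElt P d).sum with hx
    have hφx : φ x = 0 := by
      rw [hx, map_list_sum, List.map_map]
      rw [telescope' (fun w : ↥(extSet P) => lvl P ↑w) c _ ?_, sub_self]
      intro d hd
      show φ (cf d • eElt P d) = _
      rw [_root_.map_smul, smul_eq_mul, hcf, div_mul_cancel₀ _ (hA d hd)]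
    have hbr : ∀ y, φ ⁅x, y⁆ = 0 := by
      intro y
      have heq : φ ⁅x, y⁆ = psi φ y x := rfl
      rw [heq, hx, map_list_sum, List.map_map]
      rw [telescope'
        (fun w : ↥(extSet P) => (y : Matrix (Fin n) (Fin n) ℂ) ↑w ↑w) c _ ?_, sub_self]
      intro d hd
      show psi φ y (cf d • eElt P d) = _
      rw [_root_.map_smul, smul_eq_mul]
      show cf d * φ ⁅eElt P d, y⁆ = _
      rw [bracket_eElt, _root_.map_smul, smul_eq_mul, hcf]
      have key := lvl_mul_diff d (fun w => (y : Matrix (Fin n) (Fin n) ℂ) w w)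
      have hφe := hA d hd
      field_simp
      linear_combination key
    have hnonnil : c.darts ≠ [] := by
      intro h
      have h3 := hc.three_le_length
      have hlen := c.length_darts
      rw [h] at hlen
      simp at hlen
      omega
    obtain ⟨d0, rest, hdn⟩ : ∃ d0 rest, c.darts = d0 :: rest := by
      cases hds : c.darts with
      | nil => exact absurd hds hnonnil
      | cons a t => exact ⟨a, t, rfl⟩
    have hd0mem : d0 ∈ c.darts := by rw [hdn]; exact List.mem_cons_self
    have hedges : (d0.edge) ∉ rest.map SimpleGraph.Dart.edge := by
      have hnd : c.edges.Nodup := hc.edges_nodup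
      rw [SimpleGraph.Walk.edges, hdn, List.map_cons, List.nodup_cons] at hnd
      exact hnd.1
    have hentry : (x : Matrix (Fin n) (Fin n) ℂ) (dbot P d0) (dtop P d0) = cf d0 := by
      rw [hx, sum_entry, hdn, List.map_cons, List.sum_cons]
      rw [if_pos ⟨rfl, rfl⟩, mul_one]
      rw [List.sum_eq_zero, add_zero]
      intro z hz
      rw [List.mem_map] at hz
      obtain ⟨d, hdr, rfl⟩ := hz
      rw [if_neg, mul_zero]
      rintro ⟨hb, ht⟩
      exact hedges (dart_edge_eq d d0 hb ht ▸ List.mem_map_of_mem hdr)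
    have hcf0 : cf d0 ≠ 0 := div_ne_zero (lvl_diff_ne_zero d0) (hA d0 hd0mem)
    refine ⟨x, ?_, hφx, hbr⟩
    intro h0
    rw [h0] at hentry
    exact hcf0 (by simpa using hentry.symm)

end KerElt

/-- Pairing against `y` via the Kirillov form, generic version. -/
noncomputable def psiG {g : Type*} [LieRing g] [LieAlgebra ℂ g]
    (φ : Module.Dual ℂ g) (y : g) : g →ₗ[ℂ] ℂ where
  toFun x := φ ⁅x, y⁆
  map_add' a b := by show φ ⁅a + b, y⁆ = φ ⁅a, y⁆ + φ ⁅b, y⁆; rw [add_lie, map_add]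
  map_smul' c a := by show φ ⁅c • a, y⁆ = c • φ ⁅a, y⁆; rw [smul_lie, _root_.map_smul]

/-- If `φ` kills `x ≠ 0` and all brackets with `x`, then `\widehat{B}_φ` is singular. -/
lemma det_hatB_zero {g : Type*} [LieRing g] [LieAlgebra ℂ g] {k : ℕ}
    (E : Module.Basis (Fin (2 * k + 1)) ℂ g) (φ : Module.Dual ℂ g)
    (x : g) (hx : x ≠ 0) (h1 : φ x = 0) (h2 : ∀ y, φ ⁅x, y⁆ = 0) :
    (hatB (⇑E) φ).det = 0 := by
  classical
  rw [← Matrix.exists_vecMul_eq_zero_iff]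
  refine ⟨Fin.cases 0 (fun i => E.repr x i), ?_, ?_⟩
  · intro h0
    apply hx
    have hrepr : E.repr x = 0 := by
      ext i
      have hi := congrFun h0 i.succ
      simpa using hi
    exact E.repr.map_eq_zero_iff.mp hrepr
  · funext j
    show (Fin.cases 0 (fun i => E.repr x i) ⬝ᵥ fun i => hatB (⇑E) φ i j) = 0
    rw [dotProduct, Fin.sum_univ_succ]
    rw [Fin.cases_zero, zero_mul, zero_add]
    have hB : ∀ (i : Fin (2 * k + 1)),
        hatB (⇑E) φ i.succ j
          = Fin.cases (-(φ (E i))) (fun j' => φ ⁅E i, E j'⁆) j := by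
      intro i
      simp only [hatB, Matrix.of_apply, Fin.cases_succ]
    simp only [Fin.cases_succ, hB]
    induction j using Fin.cases with
    | zero =>
      simp only [Fin.cases_zero]
      have : ∑ i, E.repr x i * -(φ (E i)) = -(φ x) := by
        calc ∑ i, E.repr x i * -(φ (E i))
            = -∑ i, φ (E.repr x i • E i) := by
              rw [← Finset.sum_neg_distrib]
              refine Finset.sum_congr rfl fun i _ => ?_
              rw [_root_.map_smul, smul_eq_mul, mul_neg]
          _ = -(φ (∑ i, E.repr x i • E i)) := by rw [map_sum]
          _ = -(φ x) := by rw [E.sum_repr]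
      rw [this, h1, neg_zero]
    | succ j' =>
      simp only [Fin.cases_succ]
      have : ∑ i, E.repr x i * φ ⁅E i, E j'⁆ = φ ⁅x, E j'⁆ := by
        calc ∑ i, E.repr x i * φ ⁅E i, E j'⁆
            = ∑ i, psiG φ (E j') (E.repr x i • E i) := by
              refine Finset.sum_congr rfl fun i _ => ?_
              rw [_root_.map_smul, smul_eq_mul]
              rfl
          _ = psiG φ (E j') (∑ i, E.repr x i • E i) := (map_sum _ _ _).symm
          _ = φ ⁅x, E j'⁆ := by rw [E.sum_repr]; rfl
      rw [this, h2]

/-- if the Hasse diagram of the subposet induced on the extremal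
elements of `P` contains a cycle, then `g_A(P)` is not contact. -/
theorem stmt1 {n : ℕ} (P : FinPoset n)
    (hcyc : ¬ (hasseOn P (extSet P)).IsAcyclic) :
    ¬ IsContact ↥(gA P) := by
  rintro ⟨φ, k, E, hdet⟩
  obtain ⟨x, hx, h1, h2⟩ := exists_ker hcyc φ
  exact hdet (det_hatB_zero E φ x hx h1 h2)
end

section
/- If P is a connected finite poset of height one, then the type-A Lie poset algebra g_A(P) is not contact. -/
open Matrix

attribute [local instance 100] LieRing.ofAssociativeRing

section Stmt3Aux

variable {n : ℕ}

/-- No 3-chains in a height-one poset. -/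
lemma no_three_chain (P : FinPoset n) (hht : heightEq P 1) {i j k : Fin n}
    (hij : P.lt i j) (hjk : P.lt j k) : False := by
  apply hht.2
  have h1 : i ≠ j := hij.2
  have h2 : j ≠ k := hjk.2
  have h3 : i ≠ k := by
    rintro rfl
    exact h1 (P.le_antisymm _ _ hij.1 hjk.1)
  refine ⟨{i, j, k}, ?_, ?_⟩
  · rw [Finset.card_insert_of_notMem (by simp [h1, h3]),
      Finset.card_insert_of_notMem (by simp [h2]), Finset.card_singleton]
  · intro a ha b hb
    have lij := hij.1
    have ljk := hjk.1
    have lik := P.le_trans _ _ _ lij ljk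
    simp only [Finset.mem_insert, Finset.mem_singleton] at ha hb
    rcases ha with rfl | rfl | rfl <;> rcases hb with rfl | rfl | rfl <;>
      first
        | exact Or.inl (P.le_refl _)
        | exact Or.inl lij
        | exact Or.inr lij
        | exact Or.inl ljk
        | exact Or.inr ljk
        | exact Or.inl lik
        | exact Or.inr lik

lemma min_of_lt (P : FinPoset n) (hht : heightEq P 1) {i j : Fin n} (h : P.lt i j) :
    ∀ k, ¬ P.lt k i := fun _ hk => (no_three_chain P hht hk h).elim

lemma max_of_lt (P : FinPoset n) (hht : heightEq P 1) {i j : Fin n} (h : P.lt i j) :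
    ∀ k, ¬ P.lt j k := fun _ hk => (no_three_chain P hht h hk).elim

/-- Matrix units attached to strict relations, as elements of `gA P`. -/
noncomputable def myE (P : FinPoset n) (i j : Fin n) (h : P.lt i j) : ↥(gA P) :=
  ⟨Matrix.single i j 1,
    Matrix.trace_single_eq_of_ne i j 1 h.2,
    fun a b hab => Matrix.single_apply_of_ne i j 1 a b
      (fun hc => hab (by rw [← hc.1, ← hc.2]; exact h.1))⟩

/-- Trace-zero diagonal matrices, as elements of `gA P`. -/
noncomputable def myD (P : FinPoset n) (d : Fin n → ℂ) (hd : ∑ a, d a = 0) : ↥(gA P) :=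
  ⟨Matrix.diagonal d, by simpa [Matrix.trace_diagonal] using hd,
    fun a b hab => Matrix.diagonal_apply_ne d (fun hab' => hab (hab' ▸ P.le_refl a))⟩

/-- The key bracket computation in a height-one poset algebra. -/
lemma bracket_myE (P : FinPoset n) (hht : heightEq P 1) (x : ↥(gA P)) {i j : Fin n}
    (h : P.lt i j) : ⁅x, myE P i j h⁆ = (x.1 i i - x.1 j j) • myE P i j h := by
  have hxi : ∀ a, a ≠ i → x.1 a i = 0 := by
    intro a ha
    by_cases hle : P.le a i
    · exact absurd ⟨hle, ha⟩ (min_of_lt P hht h a)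
    · exact x.2.2 a i hle
  have hxj : ∀ b, b ≠ j → x.1 j b = 0 := by
    intro b hb
    by_cases hle : P.le j b
    · exact absurd ⟨hle, fun hjb => hb hjb.symm⟩ (max_of_lt P hht h b)
    · exact x.2.2 j b hle
  apply Subtype.ext
  rw [LieSubalgebra.coe_bracket]
  rw [show (((x.1 i i - x.1 j j) • myE P i j h : ↥(gA P)) : Matrix (Fin n) (Fin n) ℂ)
      = (x.1 i i - x.1 j j) • (myE P i j h).1 from rfl]
  show ⁅x.1, Matrix.single i j (1:ℂ)⁆
      = (x.1 i i - x.1 j j) • Matrix.single i j (1:ℂ)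
  ext a b
  rw [Ring.lie_def]
  simp only [Matrix.sub_apply, Matrix.smul_apply, smul_eq_mul]
  by_cases hb : b = j
  · subst hb
    by_cases ha : a = i
    · subst ha
      rw [Matrix.mul_single_apply_same, Matrix.single_mul_apply_same,
        Matrix.single_apply_same]
      ring
    · rw [Matrix.mul_single_apply_same,
        Matrix.single_mul_apply_of_ne _ _ _ _ _ ha,
        hxi a ha, Matrix.single_apply_of_ne _ _ _ _ _ (fun hc => ha hc.1.symm)]
      ring
  · rw [Matrix.mul_single_apply_of_ne _ _ _ _ _ hb,
      Matrix.single_apply_of_ne _ _ _ _ _ (fun hc => hb hc.2.symm)]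
    by_cases ha : a = i
    · subst ha
      rw [Matrix.single_mul_apply_same, hxj b hb]
      ring
    · rw [Matrix.single_mul_apply_of_ne _ _ _ _ _ ha]
      ring

/-- The linear map `y ↦ φ ⁅x, y⁆`. -/
noncomputable def Bop {g : Type*} [LieRing g] [LieAlgebra ℂ g]
    (φ : Module.Dual ℂ g) (x : g) : g →ₗ[ℂ] ℂ where
  toFun y := φ ⁅x, y⁆
  map_add' y z := by show φ ⁅x, y + z⁆ = φ ⁅x, y⁆ + φ ⁅x, z⁆; rw [lie_add, map_add]
  map_smul' c y := by show φ ⁅x, c • y⁆ = c • φ ⁅x, y⁆; rw [lie_smul, _root_.map_smul]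

end Stmt3Aux

/-- a connected poset of height one never yields a contact type-A Lie
poset algebra. -/
theorem stmt3 {n : ℕ} (P : FinPoset n)
    (hconn : (hasse P).Connected) (hht : heightEq P 1) :
    ¬ IsContact ↥(gA P) := by
  rintro ⟨φ, k, E, hdet⟩
  classical
  -- `n` is positive
  have hn : n ≠ 0 := by
    obtain ⟨s, hs, -⟩ := hht.1
    have : s.Nonempty := Finset.card_pos.mp (by rw [hs]; norm_num)
    obtain ⟨i0, -⟩ := this
    exact fun h => absurd i0.2 (by omega)
  -- STEP 1: from nondegeneracy of the extended form, elements of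
  -- `ker B_φ ∩ ker φ` vanish.
  have hker : ∀ x : ↥(gA P), φ x = 0 → (∀ y, φ ⁅x, y⁆ = 0) → x = 0 := by
    intro x hx0 hxB
    set c : Fin (2 * k + 1) → ℂ := fun i => E.repr x i with hc
    have hmv : (hatB (⇑E) φ) *ᵥ (Fin.cases 0 c) = 0 := by
      funext i
      show (∑ j, hatB (⇑E) φ i j * Fin.cases 0 c j) = 0
      induction i using Fin.cases with
      | zero =>
        rw [Fin.sum_univ_succ]
        simp only [hatB, Matrix.of_apply, Fin.cases_zero, Fin.cases_succ, mul_zero, zero_add]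
        have : (∑ j' : Fin (2 * k + 1), φ (E j') * c j') = φ x := by
          conv_rhs => rw [← E.sum_repr x]
          rw [map_sum]
          exact Finset.sum_congr rfl fun j' _ => by rw [_root_.map_smul, smul_eq_mul, mul_comm]
        rw [this, hx0]
      | succ i' =>
        rw [Fin.sum_univ_succ]
        simp only [hatB, Matrix.of_apply, Fin.cases_zero, Fin.cases_succ, mul_zero, zero_add]
        have h1 : (∑ j' : Fin (2 * k + 1), φ ⁅E i', E j'⁆ * c j') = φ ⁅E i', x⁆ := by
          have : φ ⁅E i', x⁆ = Bop φ (E i') x := rfl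
          rw [this]
          conv_rhs => rw [← E.sum_repr x]
          rw [map_sum]
          exact Finset.sum_congr rfl fun j' _ => by
            rw [_root_.map_smul, smul_eq_mul, mul_comm]
            rfl
        rw [h1, ← lie_skew, map_neg, hxB (E i'), neg_zero]
    have hv := Matrix.eq_zero_of_mulVec_eq_zero hdet hmv
    have hc0 : E.repr x = 0 := by
      ext j
      have := congrFun hv j.succ
      simpa [Fin.cases_succ] using this
    have : E.repr x = E.repr 0 := by rw [hc0, map_zero]
    exact E.repr.injective this
  -- STEP 2: the Kirillov form has a nonzero kernel vector (odd dimension).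
  set C : Matrix (Fin (2 * k + 1)) (Fin (2 * k + 1)) ℂ :=
    Matrix.of fun i j => φ ⁅E i, E j⁆ with hC
  have hCdet : C.det = 0 := by
    have hskew : Cᵀ = -C := by
      ext i j
      simp only [Matrix.transpose_apply, Matrix.neg_apply, hC, Matrix.of_apply]
      rw [← lie_skew (E i) (E j), map_neg, neg_neg]
    have h1 : C.det = -C.det := by
      conv_lhs => rw [← Matrix.det_transpose, hskew, Matrix.det_neg]
      rw [Fintype.card_fin, Odd.neg_one_pow ⟨k, by ring⟩]
      ring
    have h2 : (2 : ℂ) * C.det = 0 := by linear_combination h1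
    rcases mul_eq_zero.mp h2 with h | h
    · exact absurd h two_ne_zero
    · exact h
  obtain ⟨u, hu0, huC⟩ := Matrix.exists_mulVec_eq_zero_iff.mpr hCdet
  set x0 : ↥(gA P) := ∑ j, u j • E j with hx0def
  have hx0ne : x0 ≠ 0 := by
    intro h
    apply hu0
    have h1 : E.equivFun.symm u = 0 := by
      rw [Module.Basis.equivFun_symm_apply]; exact h
    simpa using (map_eq_zero_iff _ E.equivFun.symm.injective).mp h1
  have hx0B : ∀ y, φ ⁅x0, y⁆ = 0 := by
    have hEi : ∀ i, φ ⁅E i, x0⁆ = 0 := by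
      intro i
      have h1 : φ ⁅E i, x0⁆ = Bop φ (E i) x0 := rfl
      have h2 : Bop φ (E i) x0 = ∑ j, u j * φ ⁅E i, E j⁆ := by
        rw [hx0def, map_sum]
        exact Finset.sum_congr rfl fun j _ => by rw [_root_.map_smul, smul_eq_mul]; rfl
      have h3 : (∑ j, u j * φ ⁅E i, E j⁆) = (C *ᵥ u) i := by
        show _ = ∑ j, C i j * u j
        exact Finset.sum_congr rfl fun j _ => by rw [mul_comm]; rfl
      rw [h1, h2, h3, huC]
      rfl
    intro y
    have hψ : Bop φ x0 = 0 := by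
      apply E.ext
      intro i
      show φ ⁅x0, E i⁆ = 0
      rw [← lie_skew, map_neg, hEi i, neg_zero]
    have := congrArg (fun f => f y) hψ
    exact this
  have hφx0 : φ x0 ≠ 0 := fun h => hx0ne (hker x0 h hx0B)
  -- STEP 3: combinatorics of the height-one connected poset.
  by_cases hall : ∀ i j (h : P.lt i j), φ (myE P i j h) ≠ 0
  · -- all `φ`-values on matrix units are nonzero
    have hstep : ∀ i j (h : P.lt i j), x0.1 i i = x0.1 j j := by
      intro i j h
      have hb := hx0B (myE P i j h)
      rw [bracket_myE P hht x0 h, _root_.map_smul, smul_eq_mul] at hb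
      rcases mul_eq_zero.mp hb with h' | h'
      · exact sub_eq_zero.mp h'
      · exact absurd h' (hall i j h)
    have hadj : ∀ a b, (hasse P).Adj a b → x0.1 a a = x0.1 b b := by
      intro a b hab
      rw [hasse, SimpleGraph.fromRel_adj] at hab
      obtain ⟨-, h | h⟩ := hab
      · exact hstep a b h.1
      · exact (hstep b a h.1).symm
    have hconst : ∀ a b : Fin n, x0.1 a a = x0.1 b b := by
      intro a b
      obtain ⟨w⟩ := hconn.preconnected a b
      induction w with
      | nil => rfl
      | cons h p ih => exact (hadj _ _ h).trans ih
    have hdiag0 : ∀ a, x0.1 a a = 0 := by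
      intro a
      have htr : Matrix.trace x0.1 = 0 := x0.2.1
      have h1 : Matrix.trace x0.1 = (n : ℂ) * x0.1 a a := by
        show (∑ b, x0.1 b b) = _
        rw [Finset.sum_congr rfl (fun b _ => hconst b a)]
        simp [Finset.sum_const, Finset.card_univ, mul_comm]
      rw [htr] at h1
      rcases mul_eq_zero.mp h1.symm with h | h
      · exact absurd h (Nat.cast_ne_zero.mpr hn)
      · exact h
    -- the diagonal element acting as identity on the span of the matrix units
    set A : Fin n → ℂ := fun a => if ∃ b, P.lt b a then 1 else 0 with hA
    set t : ℂ := (∑ a, A a) / n with ht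
    have hn' : (n : ℂ) ≠ 0 := Nat.cast_ne_zero.mpr hn
    have hd : (∑ a, (A a - t)) = 0 := by
      rw [Finset.sum_sub_distrib, Finset.sum_const, Finset.card_univ, Fintype.card_fin,
        nsmul_eq_mul, ht]
      field_simp
      ring
    set Y : ↥(gA P) := myD P (fun a => A a - t) hd with hY
    have hbr : ⁅x0, Y⁆ = x0 := by
      apply Subtype.ext
      rw [LieSubalgebra.coe_bracket]
      show ⁅x0.1, Matrix.diagonal (fun a => A a - t)⁆ = x0.1
      ext a b
      rw [Ring.lie_def, Matrix.sub_apply, Matrix.mul_diagonal, Matrix.diagonal_mul]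
      by_cases hz : x0.1 a b = 0
      · rw [hz]; ring
      · have hle : P.le a b := by
          by_contra hcon
          exact hz (x0.2.2 a b hcon)
        have hne : a ≠ b := by
          rintro rfl
          exact hz (hdiag0 a)
        have hlt : P.lt a b := ⟨hle, hne⟩
        have hAa : A a = 0 := by
          rw [hA]
          exact if_neg (fun hcon => min_of_lt P hht hlt hcon.choose hcon.choose_spec)
        have hAb : A b = 1 := by
          rw [hA]
          exact if_pos ⟨a, hlt⟩
        rw [hAa, hAb]
        ring
    exact hφx0 (by rw [← hbr, hx0B Y])
  · -- some matrix unit is killed by `φ`: it lies in the kernel of the extended form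
    push_neg at hall
    obtain ⟨i, j, h, hphi⟩ := hall
    have h0 : myE P i j h = 0 := by
      apply hker _ hphi
      intro y
      rw [← lie_skew, map_neg, bracket_myE P hht y h, _root_.map_smul, smul_eq_mul, hphi,
        mul_zero, neg_zero]
    have h1 : (myE P i j h).1 i j = (1 : ℂ) := by
      show Matrix.single i j (1 : ℂ) i j = 1
      exact Matrix.single_apply_same i j 1
    rw [h0] at h1
    exact one_ne_zero h1.symm
end

section
/- Let P be a disconnected finite poset of height at most two. Then g_A(P) is contact if and only if P is the disjoint sum of two posets P_1 and P_2 such that g_A(P_1) and g_A(P_2) are both Frobenius (index zero). -/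
open Matrix

attribute [local instance 100] LieRing.ofAssociativeRing

open Matrix Module

lemma even_finrank_of_alt {V : Type*} [AddCommGroup V] [Module ℂ V] [FiniteDimensional ℂ V]
    (f : V →ₗ[ℂ] V →ₗ[ℂ] ℂ) (halt : ∀ x, f x x = 0)
    (hnd : ∀ x, (∀ y, f x y = 0) → x = 0) : Even (finrank ℂ V) := by
  by_contra hodd
  set d := finrank ℂ V with hd
  let b : Basis (Fin d) ℂ V := finBasis ℂ V
  set M : Matrix (Fin d) (Fin d) ℂ := Matrix.of (fun i j => f (b i) (b j)) with hM
  have hsymm : ∀ (x y : V), f y x = - f x y := by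
    intro x y
    have h := halt (x + y)
    simp only [map_add, LinearMap.add_apply, halt x, halt y] at h
    linear_combination h
  have h1 : M.transpose = -M := by
    ext i j
    simp only [Matrix.transpose_apply, hM, Matrix.of_apply, Matrix.neg_apply]
    exact hsymm _ _
  have h2 : M.det = -M.det := by
    conv_lhs => rw [← Matrix.det_transpose, h1]
    rw [Matrix.det_neg, Fintype.card_fin, (Nat.not_even_iff_odd.mp hodd).neg_one_pow]
    ring
  have hdet : M.det = 0 := by
    have h3 : (2:ℂ) * M.det = 0 := by linear_combination h2
    exact (mul_eq_zero.mp h3).resolve_left two_ne_zero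
  obtain ⟨v, hv, hmv⟩ := Matrix.exists_mulVec_eq_zero_iff.mpr hdet
  set x : V := ∑ j, v j • b j with hx
  have hxy : ∀ y, f x y = 0 := by
    intro y
    have hcol : ∀ i, f x (b i) = 0 := by
      intro i
      have hrow := congrFun hmv i
      simp only [Matrix.mulVec, dotProduct, hM, Matrix.of_apply, Pi.zero_apply] at hrow
      have hfx : f x (b i) = ∑ j, v j * f (b j) (b i) := by
        simp [hx, map_sum, LinearMap.sum_apply, mul_comm]
      have : f x (b i) = - ∑ j, f (b i) (b j) * v j := by
        rw [hfx, ← Finset.sum_neg_distrib]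
        apply Finset.sum_congr rfl
        intro j _
        rw [hsymm (b i) (b j)]
        ring
      rw [this, hrow, neg_zero]
    have hy : f x y = ∑ i, (b.repr y i) • f x (b i) := by
      conv_lhs => rw [← b.sum_repr y]
      simp only [map_sum, _root_.map_smul, smul_eq_mul]
    simp [hy, hcol]
  have hx0 : x = 0 := hnd x hxy
  apply hv
  have hrepr := b.repr_sum_self v
  rw [← hx, hx0] at hrepr
  rw [← hrepr]
  simp

open Module

section Contact
variable {g : Type*} [LieRing g] [LieAlgebra ℂ g]

lemma phi_lie_skew (φ : Module.Dual ℂ g) (a b : g) : φ ⁅a, b⁆ = - φ ⁅b, a⁆ := by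
  rw [← lie_skew a b, map_neg]

lemma hatB_det_ne_zero_iff {m : ℕ} (E : Basis (Fin m) ℂ g) (φ : Module.Dual ℂ g) :
    (hatB (⇑E) φ).det ≠ 0 ↔
      ∀ (v₀ : ℂ) (x : g), φ x = 0 → (∀ y, φ ⁅y, x⁆ = v₀ * φ y) → v₀ = 0 ∧ x = 0 := by
  have hB00 : hatB (⇑E) φ 0 0 = 0 := rfl
  have hB0s : ∀ j : Fin m, hatB (⇑E) φ 0 j.succ = φ (E j) := fun j => by
    simp [hatB]
  have hBs0 : ∀ i : Fin m, hatB (⇑E) φ i.succ 0 = -φ (E i) := fun i => by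
    simp [hatB]
  have hBss : ∀ i j : Fin m, hatB (⇑E) φ i.succ j.succ = φ ⁅E i, E j⁆ := fun i j => by
    simp [hatB]
  have hlie : ∀ (a : g) (c : Fin m → ℂ), ⁅a, ∑ j, c j • E j⁆ = ∑ j, c j • ⁅a, E j⁆ := by
    intro a c
    have h1 : ⁅a, ∑ j, c j • E j⁆ = (LieAlgebra.ad ℂ g a) (∑ j, c j • E j) := rfl
    rw [h1, map_sum]
    exact Finset.sum_congr rfl fun j _ => by simp [LieAlgebra.ad_apply]
  constructor
  · intro hdet v₀ x hφx hbr
    by_contra hcon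
    apply hdet
    rw [← Matrix.exists_mulVec_eq_zero_iff]
    refine ⟨Fin.cons v₀ (fun j => E.repr x j), ?_, ?_⟩
    · intro h0
      apply hcon
      have hv₀ : v₀ = 0 := by simpa using congrFun h0 0
      have hrx : ∀ j, E.repr x j = 0 := fun j => by simpa using congrFun h0 j.succ
      refine ⟨hv₀, ?_⟩
      have hr : E.repr x = 0 := by ext j; exact hrx j
      simpa using congrArg E.repr.symm hr
    · funext i
      rw [Matrix.mulVec, Pi.zero_apply]
      refine Fin.cases ?_ ?_ i
      · rw [dotProduct, Fin.sum_univ_succ]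
        simp only [hB00, hB0s, Fin.cons_zero, Fin.cons_succ, zero_mul, zero_add]
        calc ∑ j, φ (E j) * E.repr x j = φ (∑ j, E.repr x j • E j) := by
              rw [map_sum]; exact Finset.sum_congr rfl fun j _ => by simp [mul_comm]
          _ = 0 := by rw [E.sum_repr x, hφx]
      · intro i
        rw [dotProduct, Fin.sum_univ_succ]
        simp only [hBs0, hBss, Fin.cons_zero, Fin.cons_succ]
        have h1 : ∑ j, φ ⁅E i, E j⁆ * E.repr x j = φ ⁅E i, x⁆ := by
          conv_rhs => rw [← E.sum_repr x]
          rw [hlie, map_sum]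
          exact Finset.sum_congr rfl fun j _ => by simp [mul_comm]
        rw [h1, hbr (E i)]
        ring
  · intro hcond hdet0
    obtain ⟨v, hv, hmv⟩ := Matrix.exists_mulVec_eq_zero_iff.mpr hdet0
    set v₀ : ℂ := v 0 with hv₀
    set x : g := ∑ j, v j.succ • E j with hx
    have hφx : φ x = 0 := by
      have hrow := congrFun hmv 0
      rw [Matrix.mulVec, dotProduct, Fin.sum_univ_succ, Pi.zero_apply] at hrow
      simp only [hB00, hB0s, zero_mul, zero_add] at hrow
      rw [hx, map_sum, ← hrow]
      exact Finset.sum_congr rfl fun j _ => by simp [mul_comm]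
    have hrows : ∀ i : Fin m, φ ⁅E i, x⁆ = v₀ * φ (E i) := by
      intro i
      have hrow := congrFun hmv i.succ
      rw [Matrix.mulVec, dotProduct, Fin.sum_univ_succ, Pi.zero_apply] at hrow
      simp only [hBs0, hBss] at hrow
      have hx2 : φ ⁅E i, x⁆ = ∑ j, φ ⁅E i, E j⁆ * v j.succ := by
        rw [hx, hlie, map_sum]
        exact Finset.sum_congr rfl fun j _ => by simp [mul_comm]
      rw [hx2]
      linear_combination hrow
    have hbr : ∀ y, φ ⁅y, x⁆ = v₀ * φ y := by
      intro y
      have key : ((-φ).comp ((LieAlgebra.ad ℂ g) x : g →ₗ[ℂ] g) : g →ₗ[ℂ] ℂ) = v₀ • φ := by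
        apply E.ext
        intro i
        simp only [LinearMap.comp_apply, LinearMap.neg_apply, LieAlgebra.ad_apply,
          LinearMap.smul_apply, smul_eq_mul]
        rw [← hrows i, phi_lie_skew φ (E i) x]
      have hk := congrFun (congrArg (fun f : g →ₗ[ℂ] ℂ => (f : g → ℂ)) key) y
      simp only [LinearMap.comp_apply, LinearMap.neg_apply, LieAlgebra.ad_apply,
        LinearMap.smul_apply, smul_eq_mul] at hk
      rw [phi_lie_skew φ y x, ← hk]
    obtain ⟨h0, hx0⟩ := hcond v₀ x hφx hbr
    apply hv
    have hcoef : ∀ j : Fin m, v j.succ = 0 := by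
      intro j
      have hr := E.repr_sum_self (fun j => v j.succ)
      rw [← hx, hx0] at hr
      have := congrFun hr.symm j
      simpa using this
    funext i
    refine Fin.cases ?_ ?_ i
    · exact h0
    · exact hcoef

lemma isContact_iff [FiniteDimensional ℂ g] :
    IsContact g ↔ Odd (finrank ℂ g) ∧
      ∃ φ : Module.Dual ℂ g,
        ∀ (v₀ : ℂ) (x : g), φ x = 0 → (∀ y, φ ⁅y, x⁆ = v₀ * φ y) → v₀ = 0 ∧ x = 0 := by
  constructor
  · rintro ⟨φ, k, E, hdet⟩
    have hrank : finrank ℂ g = 2 * k + 1 := by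
      rw [finrank_eq_card_basis E, Fintype.card_fin]
    exact ⟨⟨k, by omega⟩, φ, (hatB_det_ne_zero_iff E φ).mp hdet⟩
  · rintro ⟨⟨k, hk⟩, φ, hcond⟩
    have hrank : finrank ℂ g = 2 * k + 1 := by omega
    refine ⟨φ, k, (finBasis ℂ g).reindex (finCongr hrank), ?_⟩
    exact (hatB_det_ne_zero_iff _ φ).mpr hcond

end Contact

section Frob
variable {g : Type*} [LieRing g] [LieAlgebra ℂ g]

lemma mem_kerB_iff (φ : Module.Dual ℂ g) (x : g) : x ∈ kerB φ ↔ ∀ y, φ ⁅x, y⁆ = 0 :=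
  Iff.rfl

lemma frob_iff [FiniteDimensional ℂ g] :
    lieIndex g = 0 ↔ ∃ φ : Module.Dual ℂ g, ∀ x : g, (∀ y, φ ⁅x, y⁆ = 0) → x = 0 := by
  unfold lieIndex
  rw [Nat.sInf_eq_zero]
  constructor
  · rintro (⟨φ, hφ⟩ | hempty)
    · refine ⟨φ, fun x hx => ?_⟩
      have hker : kerB φ = ⊥ := Submodule.finrank_eq_zero.mp hφ
      have hmem : x ∈ kerB φ := hx
      rw [hker] at hmem
      simpa using hmem
    · exfalso
      have : (Module.finrank ℂ (kerB (0 : Module.Dual ℂ g))) ∈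
          {d | ∃ φ : Module.Dual ℂ g, Module.finrank ℂ (kerB φ) = d} := ⟨0, rfl⟩
      rw [hempty] at this
      exact this
  · rintro ⟨φ, hφ⟩
    left
    refine ⟨φ, ?_⟩
    rw [Submodule.finrank_eq_zero, Submodule.eq_bot_iff]
    exact fun x hx => hφ x hx

end Frob

section Main
open Module
variable {g g₁ g₂ : Type*} [LieRing g] [LieAlgebra ℂ g] [LieRing g₁] [LieAlgebra ℂ g₁]
  [LieRing g₂] [LieAlgebra ℂ g₂]
  [FiniteDimensional ℂ g] [FiniteDimensional ℂ g₁] [FiniteDimensional ℂ g₂]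

lemma main_split (θ₁ : g₁ →ₗ[ℂ] g) (θ₂ : g₂ →ₗ[ℂ] g) (z : g)
    (hθ₁ : ∀ x y, θ₁ ⁅x, y⁆ = ⁅θ₁ x, θ₁ y⁆)
    (hθ₂ : ∀ x y, θ₂ ⁅x, y⁆ = ⁅θ₂ x, θ₂ y⁆)
    (hcrossl : ∀ x y, ⁅θ₁ x, θ₂ y⁆ = 0)
    (hz : ∀ x : g, ⁅z, x⁆ = 0)
    (hF : Function.Bijective (fun p : g₁ × g₂ × ℂ => θ₁ p.1 + θ₂ p.2.1 + p.2.2 • z)) :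
    IsContact g ↔
      (∃ φ : Module.Dual ℂ g₁, ∀ x : g₁, (∀ y, φ ⁅x, y⁆ = 0) → x = 0) ∧
      (∃ φ : Module.Dual ℂ g₂, ∀ x : g₂, (∀ y, φ ⁅x, y⁆ = 0) → x = 0) := by
  have hcrossr : ∀ x y, ⁅θ₂ y, θ₁ x⁆ = 0 := fun x y => by
    rw [← lie_skew, hcrossl, neg_zero]
  have hzr : ∀ x : g, ⁅x, z⁆ = 0 := fun x => by rw [← lie_skew, hz, neg_zero]
  set F : (g₁ × g₂ × ℂ) →ₗ[ℂ] g :=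
    θ₁ ∘ₗ LinearMap.fst ℂ g₁ (g₂ × ℂ)
      + θ₂ ∘ₗ (LinearMap.fst ℂ g₂ ℂ) ∘ₗ (LinearMap.snd ℂ g₁ (g₂ × ℂ))
      + ((LinearMap.snd ℂ g₂ ℂ) ∘ₗ (LinearMap.snd ℂ g₁ (g₂ × ℂ))).smulRight z with hFdef
  have hFeq : ∀ p : g₁ × g₂ × ℂ, F p = θ₁ p.1 + θ₂ p.2.1 + p.2.2 • z := by
    intro p; simp [hFdef]
  have hFb : Function.Bijective F := by
    have : ⇑F = fun p : g₁ × g₂ × ℂ => θ₁ p.1 + θ₂ p.2.1 + p.2.2 • z := funext hFeq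
    rw [this]; exact hF
  have hzne : z ≠ 0 := by
    intro hz0
    have h1 : F (0, 0, 1) = F (0, 0, 0) := by simp [hFeq, hz0]
    have := hFb.injective h1
    have : (1 : ℂ) = 0 := congrArg (fun p : g₁ × g₂ × ℂ => p.2.2) this
    exact one_ne_zero this
  constructor
  · intro hcon
    obtain ⟨hodd, φ, hC⟩ := isContact_iff.mp hcon
    have hφz : φ z ≠ 0 := by
      intro h0
      have := (hC 0 z h0 (fun y => by
        rw [phi_lie_skew φ y z, hz y, map_zero, neg_zero, zero_mul])).2
      exact hzne this
    constructor
    · refine ⟨φ ∘ₗ θ₁, fun x₁ hx₁ => ?_⟩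
      simp only [LinearMap.comp_apply] at hx₁
      set c : ℂ := φ (θ₁ x₁) / φ z with hc
      set u : g := θ₁ x₁ - c • z with hu
      have hφu : φ u = 0 := by
        simp only [hu, map_sub, _root_.map_smul, smul_eq_mul, hc]
        field_simp
        ring
      have hbr : ∀ y, φ ⁅y, u⁆ = 0 * φ y := by
        intro y
        obtain ⟨p, hp⟩ := hFb.surjective y
        rw [hFeq] at hp
        have hlie : ⁅y, u⁆ = θ₁ ⁅p.1, x₁⁆ := by
          rw [← hp, hu]
          simp only [lie_sub, add_lie, smul_lie, lie_smul, hz, hzr, hθ₁, hcrossr x₁ p.2.1]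
          simp [hθ₁ p.1 x₁]
        rw [hlie, zero_mul]
        have : θ₁ ⁅p.1, x₁⁆ = - θ₁ ⁅x₁, p.1⁆ := by rw [← map_neg, lie_skew]
        rw [this, map_neg, hx₁ p.1, neg_zero]
      have hu0 : u = 0 := (hC 0 u hφu hbr).2
      have hθx : θ₁ x₁ = c • z := by rwa [hu, sub_eq_zero] at hu0
      have hFeq2 : F (x₁, 0, 0) = F (0, 0, c) := by
        simp [hFeq, hθx]
      have := hFb.injective hFeq2
      exact congrArg (fun p : g₁ × g₂ × ℂ => p.1) this
    · refine ⟨φ ∘ₗ θ₂, fun x₂ hx₂ => ?_⟩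
      simp only [LinearMap.comp_apply] at hx₂
      set c : ℂ := φ (θ₂ x₂) / φ z with hc
      set u : g := θ₂ x₂ - c • z with hu
      have hφu : φ u = 0 := by
        simp only [hu, map_sub, _root_.map_smul, smul_eq_mul, hc]
        field_simp
        ring
      have hbr : ∀ y, φ ⁅y, u⁆ = 0 * φ y := by
        intro y
        obtain ⟨p, hp⟩ := hFb.surjective y
        rw [hFeq] at hp
        have hlie : ⁅y, u⁆ = θ₂ ⁅p.2.1, x₂⁆ := by
          rw [← hp, hu]
          simp only [lie_sub, add_lie, smul_lie, lie_smul, hz, hzr, hθ₂] 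
          simp [hθ₂ p.2.1 x₂, hcrossl p.1 x₂]
        rw [hlie, zero_mul]
        have : θ₂ ⁅p.2.1, x₂⁆ = - θ₂ ⁅x₂, p.2.1⁆ := by rw [← map_neg, lie_skew]
        rw [this, map_neg, hx₂ p.2.1, neg_zero]
      have hu0 : u = 0 := (hC 0 u hφu hbr).2
      have hθx : θ₂ x₂ = c • z := by rwa [hu, sub_eq_zero] at hu0
      have hFeq2 : F (0, x₂, 0) = F (0, 0, c) := by
        simp [hFeq, hθx]
      have := hFb.injective hFeq2
      exact congrArg (fun p : g₁ × g₂ × ℂ => p.2.1) this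
  · rintro ⟨⟨ψ₁, h₁⟩, ⟨ψ₂, h₂⟩⟩
    set Eq : (g₁ × g₂ × ℂ) ≃ₗ[ℂ] g := LinearEquiv.ofBijective F hFb with hEq
    set L : (g₁ × g₂ × ℂ) →ₗ[ℂ] ℂ :=
      ψ₁ ∘ₗ LinearMap.fst ℂ g₁ (g₂ × ℂ)
        + ψ₂ ∘ₗ (LinearMap.fst ℂ g₂ ℂ) ∘ₗ (LinearMap.snd ℂ g₁ (g₂ × ℂ))
        + (LinearMap.snd ℂ g₂ ℂ) ∘ₗ (LinearMap.snd ℂ g₁ (g₂ × ℂ)) with hL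
    set φ : Module.Dual ℂ g := L ∘ₗ (Eq.symm : g ≃ₗ[ℂ] (g₁ × g₂ × ℂ)).toLinearMap with hφdef
    have hφF : ∀ p : g₁ × g₂ × ℂ, φ (F p) = ψ₁ p.1 + ψ₂ p.2.1 + p.2.2 := by
      intro p
      have h1 : F p = Eq p := rfl
      simp only [hφdef, LinearMap.comp_apply, LinearEquiv.coe_coe, h1,
        LinearEquiv.symm_apply_apply, hL]
      simp
    have hφθ₁ : ∀ x, φ (θ₁ x) = ψ₁ x := by
      intro x
      have : θ₁ x = F (x, 0, 0) := by simp [hFeq]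
      rw [this, hφF]; simp
    have hφθ₂ : ∀ x, φ (θ₂ x) = ψ₂ x := by
      intro x
      have : θ₂ x = F (0, x, 0) := by simp [hFeq]
      rw [this, hφF]; simp
    have hφz : φ z = 1 := by
      have : z = F (0, 0, 1) := by simp [hFeq]
      rw [this, hφF]; simp
    rw [isContact_iff]
    constructor
    · -- parity
      have hfr : finrank ℂ g = finrank ℂ g₁ + (finrank ℂ g₂ + 1) := by
        rw [← Eq.finrank_eq]
        rw [Module.finrank_prod, Module.finrank_prod, Module.finrank_self]
      have he₁ : Even (finrank ℂ g₁) := by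
        apply even_finrank_of_alt (LinearMap.mk₂ ℂ (fun x y => ψ₁ ⁅x, y⁆)
          (fun x x' y => by simp [add_lie])
          (fun c x y => by simp [smul_lie])
          (fun x y y' => by simp [lie_add])
          (fun c x y => by simp [lie_smul]))
        · intro x; simp [LinearMap.mk₂_apply]
        · intro x hx
          exact h₁ x (fun y => hx y)
      have he₂ : Even (finrank ℂ g₂) := by
        apply even_finrank_of_alt (LinearMap.mk₂ ℂ (fun x y => ψ₂ ⁅x, y⁆)
          (fun x x' y => by simp [add_lie])
          (fun c x y => by simp [smul_lie])
          (fun x y y' => by simp [lie_add])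
          (fun c x y => by simp [lie_smul]))
        · intro x; simp [LinearMap.mk₂_apply]
        · intro x hx
          exact h₂ x (fun y => hx y)
      obtain ⟨a, ha⟩ := he₁
      obtain ⟨b, hb⟩ := he₂
      exact ⟨a + b, by omega⟩
    · refine ⟨φ, fun v₀ x hφx hbr => ?_⟩
      have hv₀ : v₀ = 0 := by
        have := hbr z
        rw [hz x, map_zero, hφz, mul_one] at this
        exact this.symm
      subst hv₀
      obtain ⟨p, hp⟩ := hFb.surjective x
      have hp1 : p.1 = 0 := by
        apply h₁
        intro y₁
        have hk : φ ⁅θ₁ y₁, x⁆ = 0 := by rw [hbr (θ₁ y₁), zero_mul]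
        rw [← hp, hFeq] at hk
        simp only [lie_add, lie_smul, hzr, hcrossl, smul_zero, add_zero, ← hθ₁, map_add] at hk
        rw [hφθ₁] at hk
        have : ψ₁ ⁅p.1, y₁⁆ = - ψ₁ ⁅y₁, p.1⁆ := by rw [← map_neg, lie_skew]
        rw [this, hk, neg_zero]
      have hp2 : p.2.1 = 0 := by
        apply h₂
        intro y₂
        have hk : φ ⁅θ₂ y₂, x⁆ = 0 := by rw [hbr (θ₂ y₂), zero_mul]
        rw [← hp, hFeq] at hk
        simp only [lie_add, lie_smul, hzr, hcrossr, smul_zero, add_zero, zero_add, ← hθ₂,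
          map_add] at hk
        rw [hφθ₂] at hk
        have : ψ₂ ⁅p.2.1, y₂⁆ = - ψ₂ ⁅y₂, p.2.1⁆ := by rw [← map_neg, lie_skew]
        rw [this, hk, neg_zero]
      have hx : x = p.2.2 • z := by
        rw [← hp, hFeq, hp1, hp2]
        simp
      have ht : p.2.2 = 0 := by
        rw [hx, _root_.map_smul, hφz, smul_eq_mul, mul_one] at hφx
        exact hφx
      refine ⟨rfl, ?_⟩
      rw [hx, ht, zero_smul]

end Main

section Inst
open Matrix Module

variable {n m₁ m₂ : ℕ} (e : Fin n ≃ (Fin m₁ ⊕ Fin m₂))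

/-- auxiliary block-embedding of a pair of matrices. -/
def bm (A : Matrix (Fin m₁) (Fin m₁) ℂ) (D : Matrix (Fin m₂) (Fin m₂) ℂ) :
    Matrix (Fin n) (Fin n) ℂ :=
  (Matrix.fromBlocks A 0 0 D).submatrix ⇑e ⇑e

lemma bm_apply (A D) (i j : Fin n) : bm e A D i j = Matrix.fromBlocks A 0 0 D (e i) (e j) := rfl

lemma bm_add (A A' D D') : bm e (A + A') (D + D') = bm e A D + bm e A' D' := by
  ext i j
  cases h1 : e i <;> cases h2 : e j <;>
    simp [bm_apply, h1, h2, Matrix.add_apply]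

lemma bm_sub (A A' D D') : bm e (A - A') (D - D') = bm e A D - bm e A' D' := by
  ext i j
  cases h1 : e i <;> cases h2 : e j <;>
    simp [bm_apply, h1, h2, Matrix.sub_apply]

lemma bm_smul (c : ℂ) (A D) : bm e (c • A) (c • D) = c • bm e A D := by
  ext i j
  cases h1 : e i <;> cases h2 : e j <;>
    simp [bm_apply, h1, h2, Matrix.smul_apply]

lemma bm_zero : bm e 0 0 = 0 := by
  ext i j
  cases h1 : e i <;> cases h2 : e j <;> simp [bm_apply, h1, h2]

lemma bm_mul (A A' D D') : bm e A D * bm e A' D' = bm e (A * A') (D * D') := by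
  unfold bm
  rw [Matrix.submatrix_mul_equiv, Matrix.fromBlocks_multiply]
  simp

lemma bm_inj {A A' D D'} (h : bm e A D = bm e A' D') : A = A' ∧ D = D' := by
  constructor
  · ext a b
    have := congrFun (congrFun h (e.symm (Sum.inl a))) (e.symm (Sum.inl b))
    simpa [bm_apply, Equiv.apply_symm_apply] using this
  · ext a b
    have := congrFun (congrFun h (e.symm (Sum.inr a))) (e.symm (Sum.inr b))
    simpa [bm_apply, Equiv.apply_symm_apply] using this

lemma bm_trace (A D) : Matrix.trace (bm e A D) = Matrix.trace A + Matrix.trace D := by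
  have h1 : Matrix.trace (bm e A D) = ∑ i, Matrix.fromBlocks A 0 0 D (e i) (e i) := by
    simp [Matrix.trace, Matrix.diag, bm_apply]
  rw [h1, Equiv.sum_comp e (fun s => Matrix.fromBlocks A 0 0 D s s)]
  simp [Fintype.sum_sum_type, Matrix.trace, Matrix.diag]

variable {P : FinPoset n} {P₁ : FinPoset m₁} {P₂ : FinPoset m₂}

section withChar

variable
  (hchar : ∀ i j : Fin n, P.le i j ↔
      ((∃ a b, e i = Sum.inl a ∧ e j = Sum.inl b ∧ P₁.le a b) ∨
        (∃ a b, e i = Sum.inr a ∧ e j = Sum.inr b ∧ P₂.le a b)))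

include hchar

lemma cross_zero₁ {N : Matrix (Fin n) (Fin n) ℂ} (hN : N ∈ gA P)
    {i j : Fin n} {a : Fin m₁} {b : Fin m₂} (h1 : e i = Sum.inl a) (h2 : e j = Sum.inr b) :
    N i j = 0 := by
  apply hN.2
  intro hle
  rcases (hchar i j).mp hle with ⟨a', b', ha, hb, _⟩ | ⟨a', b', ha, hb, _⟩
  · rw [h2] at hb; exact Sum.inr_ne_inl hb
  · rw [h1] at ha; exact Sum.inl_ne_inr ha

lemma cross_zero₂ {N : Matrix (Fin n) (Fin n) ℂ} (hN : N ∈ gA P)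
    {i j : Fin n} {a : Fin m₂} {b : Fin m₁} (h1 : e i = Sum.inr a) (h2 : e j = Sum.inl b) :
    N i j = 0 := by
  apply hN.2
  intro hle
  rcases (hchar i j).mp hle with ⟨a', b', ha, hb, _⟩ | ⟨a', b', ha, hb, _⟩
  · rw [h1] at ha; exact Sum.inr_ne_inl ha
  · rw [h2] at hb; exact Sum.inl_ne_inr hb

lemma mem_block {N : Matrix (Fin n) (Fin n) ℂ} (hN : N ∈ gA P) :
    N = bm e (N.submatrix (fun a => e.symm (Sum.inl a)) (fun b => e.symm (Sum.inl b)))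
          (N.submatrix (fun a => e.symm (Sum.inr a)) (fun b => e.symm (Sum.inr b))) := by
  ext i j
  rw [bm_apply]
  cases h1 : e i with
  | inl a =>
    cases h2 : e j with
    | inl b =>
      simp only [Matrix.fromBlocks_apply₁₁, Matrix.submatrix_apply]
      rw [← h1, ← h2, e.symm_apply_apply, e.symm_apply_apply]
    | inr b =>
      simp only [Matrix.fromBlocks_apply₁₂, Matrix.zero_apply]
      exact cross_zero₁ e hchar hN h1 h2
  | inr a =>
    cases h2 : e j with
    | inl b =>
      simp only [Matrix.fromBlocks_apply₂₁, Matrix.zero_apply]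
      exact cross_zero₂ e hchar hN h1 h2
    | inr b =>
      simp only [Matrix.fromBlocks_apply₂₂, Matrix.submatrix_apply]
      rw [← h1, ← h2, e.symm_apply_apply, e.symm_apply_apply]

lemma bm_mem {A D} (htr : Matrix.trace A + Matrix.trace D = 0)
    (hA : ∀ a b, ¬ P₁.le a b → A a b = 0)
    (hD : ∀ a b, ¬ P₂.le a b → D a b = 0) :
    bm e A D ∈ gA P := by
  constructor
  · rw [bm_trace]; exact htr
  · intro i j h
    rw [bm_apply]
    cases h1 : e i with
    | inl a =>
      cases h2 : e j with
      | inl b =>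
        simp only [Matrix.fromBlocks_apply₁₁]
        apply hA
        intro hle
        exact h ((hchar i j).mpr (Or.inl ⟨a, b, h1, h2, hle⟩))
      | inr b => simp
    | inr a =>
      cases h2 : e j with
      | inl b => simp
      | inr b =>
        simp only [Matrix.fromBlocks_apply₂₂]
        apply hD
        intro hle
        exact h ((hchar i j).mpr (Or.inr ⟨a, b, h1, h2, hle⟩))

lemma bm_mem₁ {A} (hA : A ∈ gA P₁) : bm e A 0 ∈ gA P := by
  apply bm_mem e hchar
  · rw [hA.1, Matrix.trace_zero, add_zero]
  · exact hA.2
  · intro a b _; rfl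

lemma bm_mem₂ {D} (hD : D ∈ gA P₂) : bm e 0 D ∈ gA P := by
  apply bm_mem e hchar
  · rw [hD.1, Matrix.trace_zero, zero_add]
  · intro a b _; rfl
  · exact hD.2

lemma zm_mem : bm e ((m₂ : ℂ) • (1 : Matrix (Fin m₁) (Fin m₁) ℂ))
    (-(m₁ : ℂ) • (1 : Matrix (Fin m₂) (Fin m₂) ℂ)) ∈ gA P := by
  apply bm_mem e hchar
  · simp [Matrix.trace_smul, Matrix.trace_one]
    ring
  · intro a b hle
    have hab : a ≠ b := fun h => hle (h ▸ P₁.le_refl a)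
    simp [Matrix.smul_apply, Matrix.one_apply_ne hab]
  · intro a b hle
    have hab : a ≠ b := fun h => hle (h ▸ P₂.le_refl a)
    simp [Matrix.smul_apply, Matrix.one_apply_ne hab]

end withChar
end Inst

section Inst2
open Matrix Module

variable {n m₁ m₂ : ℕ} (e : Fin n ≃ (Fin m₁ ⊕ Fin m₂))
variable {P : FinPoset n} {P₁ : FinPoset m₁} {P₂ : FinPoset m₂}

instance gA_findim {k : ℕ} (Q : FinPoset k) : FiniteDimensional ℂ ↥(gA Q) :=
  inferInstanceAs (FiniteDimensional ℂ ↥((gA Q).toSubmodule))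

variable
  (hchar : ∀ i j : Fin n, P.le i j ↔
      ((∃ a b, e i = Sum.inl a ∧ e j = Sum.inl b ∧ P₁.le a b) ∨
        (∃ a b, e i = Sum.inr a ∧ e j = Sum.inr b ∧ P₂.le a b)))

/-- matrix-level embedding of the first block -/
def emb1mat : Matrix (Fin m₁) (Fin m₁) ℂ →ₗ[ℂ] Matrix (Fin n) (Fin n) ℂ where
  toFun A := bm e A 0
  map_add' A A' := by simpa using bm_add e A A' 0 0
  map_smul' c A := by simpa using bm_smul e c A 0

def emb2mat : Matrix (Fin m₂) (Fin m₂) ℂ →ₗ[ℂ] Matrix (Fin n) (Fin n) ℂ where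
  toFun D := bm e 0 D
  map_add' D D' := by simpa using bm_add e (0 : Matrix (Fin m₁) (Fin m₁) ℂ) 0 D D'
  map_smul' c D := by simpa using bm_smul e c 0 D

def theta1 : ↥(gA P₁) →ₗ[ℂ] ↥(gA P) :=
  LinearMap.codRestrict (gA P).toSubmodule ((emb1mat e) ∘ₗ ((gA P₁).toSubmodule.subtype))
    (fun x => bm_mem₁ e hchar x.2)

def theta2 : ↥(gA P₂) →ₗ[ℂ] ↥(gA P) :=
  LinearMap.codRestrict (gA P).toSubmodule ((emb2mat e) ∘ₗ ((gA P₂).toSubmodule.subtype))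
    (fun x => bm_mem₂ e hchar x.2)

lemma theta1_apply (x : ↥(gA P₁)) :
    ((theta1 e hchar x : ↥(gA P)) : Matrix (Fin n) (Fin n) ℂ) = bm e ↑x 0 := rfl

lemma theta2_apply (x : ↥(gA P₂)) :
    ((theta2 e hchar x : ↥(gA P)) : Matrix (Fin n) (Fin n) ℂ) = bm e 0 ↑x := rfl

lemma theta1_bracket (x y : ↥(gA P₁)) :
    theta1 e hchar ⁅x, y⁆ = ⁅theta1 e hchar x, theta1 e hchar y⁆ := by
  apply Subtype.ext
  show bm e (↑⁅x, y⁆) 0 = (⁅theta1 e hchar x, theta1 e hchar y⁆ : ↥(gA P)).1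
  rw [LieSubalgebra.coe_bracket, LieSubalgebra.coe_bracket, theta1_apply, theta1_apply,
    Ring.lie_def, Ring.lie_def, bm_mul, bm_mul, ← bm_sub]
  simp

lemma theta2_bracket (x y : ↥(gA P₂)) :
    theta2 e hchar ⁅x, y⁆ = ⁅theta2 e hchar x, theta2 e hchar y⁆ := by
  apply Subtype.ext
  show bm e 0 (↑⁅x, y⁆) = (⁅theta2 e hchar x, theta2 e hchar y⁆ : ↥(gA P)).1
  rw [LieSubalgebra.coe_bracket, LieSubalgebra.coe_bracket, theta2_apply, theta2_apply,
    Ring.lie_def, Ring.lie_def, bm_mul, bm_mul, ← bm_sub]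
  simp

lemma theta_cross (x : ↥(gA P₁)) (y : ↥(gA P₂)) :
    ⁅theta1 e hchar x, theta2 e hchar y⁆ = 0 := by
  apply Subtype.ext
  show (⁅theta1 e hchar x, theta2 e hchar y⁆ : ↥(gA P)).1 = (0 : Matrix (Fin n) (Fin n) ℂ)
  rw [LieSubalgebra.coe_bracket, theta1_apply, theta2_apply, Ring.lie_def,
    bm_mul, bm_mul, ← bm_sub]
  simpa using bm_zero e

def zel : ↥(gA P) :=
  ⟨bm e ((m₂ : ℂ) • (1 : Matrix (Fin m₁) (Fin m₁) ℂ))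
      (-(m₁ : ℂ) • (1 : Matrix (Fin m₂) (Fin m₂) ℂ)), zm_mem e hchar⟩

lemma zel_central (x : ↥(gA P)) : ⁅zel e hchar, x⁆ = 0 := by
  apply Subtype.ext
  show (⁅zel e hchar, x⁆ : ↥(gA P)).1 = (0 : Matrix (Fin n) (Fin n) ℂ)
  rw [LieSubalgebra.coe_bracket, Ring.lie_def]
  have hblk := mem_block e hchar x.2
  rw [show (zel e hchar : Matrix (Fin n) (Fin n) ℂ) =
      bm e ((m₂ : ℂ) • 1) (-(m₁ : ℂ) • 1) from rfl, hblk, bm_mul, bm_mul, ← bm_sub]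
  have h1 : ∀ {k : ℕ} (c : ℂ) (A : Matrix (Fin k) (Fin k) ℂ),
      (c • (1 : Matrix (Fin k) (Fin k) ℂ)) * A - A * (c • 1) = 0 := by
    intro k c A
    rw [Matrix.smul_mul, Matrix.mul_smul, Matrix.one_mul, Matrix.mul_one, sub_self]
  rw [h1, h1]
  simpa using bm_zero e

lemma bm_comb (A : Matrix (Fin m₁) (Fin m₁) ℂ) (D : Matrix (Fin m₂) (Fin m₂) ℂ)
    (t : ℂ) (Z1 : Matrix (Fin m₁) (Fin m₁) ℂ) (Z2 : Matrix (Fin m₂) (Fin m₂) ℂ) :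
    bm e A 0 + bm e 0 D + t • bm e Z1 Z2 = bm e (A + t • Z1) (D + t • Z2) := by
  ext i j
  cases h1 : e i <;> cases h2 : e j <;>
    simp [bm_apply, h1, h2, Matrix.add_apply, Matrix.smul_apply]

lemma trace_block {k : ℕ} (c t : ℂ) (A : Matrix (Fin k) (Fin k) ℂ) (hA : Matrix.trace A = 0) :
    Matrix.trace (A + t • (c • (1 : Matrix (Fin k) (Fin k) ℂ))) = t * c * k := by
  rw [Matrix.trace_add, hA, zero_add, Matrix.trace_smul, Matrix.trace_smul, Matrix.trace_one]
  simp [smul_eq_mul]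
  ring

lemma F_bij (h₁ : 0 < m₁) (h₂ : 0 < m₂) :
    Function.Bijective (fun p : ↥(gA P₁) × ↥(gA P₂) × ℂ =>
      theta1 e hchar p.1 + theta2 e hchar p.2.1 + p.2.2 • zel e hchar) := by
  have hm₁ : ((m₁ : ℂ)) ≠ 0 := Nat.cast_ne_zero.mpr h₁.ne'
  have hm₂ : ((m₂ : ℂ)) ≠ 0 := Nat.cast_ne_zero.mpr h₂.ne'
  constructor
  · rintro ⟨x, y, t⟩ ⟨x', y', t'⟩ h
    have hcoe : bm e (↑x) 0 + bm e 0 (↑y) + t • bm e ((m₂:ℂ) • 1) (-(m₁:ℂ) • 1)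
        = bm e (↑x') 0 + bm e 0 (↑y') + t' • bm e ((m₂:ℂ) • 1) (-(m₁:ℂ) • 1) :=
      congrArg (fun v : ↥(gA P) => (v : Matrix (Fin n) (Fin n) ℂ)) h
    rw [bm_comb, bm_comb] at hcoe
    obtain ⟨hA, hD⟩ := bm_inj e hcoe
    have htr := congrArg Matrix.trace hA
    simp only [Matrix.trace_add, Matrix.trace_smul, Matrix.trace_one, x.2.1, x'.2.1,
      smul_eq_mul, zero_add] at htr
    have ht : t = t' := by
      have hne : ((m₂ : ℂ) * (m₁ : ℂ)) ≠ 0 := mul_ne_zero hm₂ hm₁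
      field_simp at htr
      rw [Fintype.card_fin] at htr
      exact mul_right_cancel₀ hm₁ (htr.trans (mul_comm _ _))
    subst ht
    have hx : x = x' := Subtype.ext (by
      have := hA
      rwa [add_left_inj] at this)
    have hy : y = y' := Subtype.ext (by
      have := hD
      rwa [add_left_inj] at this)
    rw [hx, hy]
  · rintro ⟨N, hN⟩
    set A := N.submatrix (fun a => e.symm (Sum.inl a)) (fun b => e.symm (Sum.inl b)) with hAdef
    set D := N.submatrix (fun a => e.symm (Sum.inr a)) (fun b => e.symm (Sum.inr b)) with hDdef
    have hblk : N = bm e A D := mem_block e hchar hN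
    have htrN : Matrix.trace A + Matrix.trace D = 0 := by
      have := hN.1
      rw [hblk, bm_trace] at this
      exact this
    set t : ℂ := Matrix.trace A / ((m₁ : ℂ) * (m₂ : ℂ)) with ht
    set M₁ := A - t • ((m₂ : ℂ) • (1 : Matrix (Fin m₁) (Fin m₁) ℂ)) with hM₁
    set M₂ := D - t • (-(m₁ : ℂ) • (1 : Matrix (Fin m₂) (Fin m₂) ℂ)) with hM₂
    have hAsupp : ∀ a b, ¬ P₁.le a b → A a b = 0 := by
      intro a b hle
      rw [hAdef]
      simp only [Matrix.submatrix_apply]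
      apply hN.2
      intro hPle
      rcases (hchar _ _).mp hPle with ⟨a', b', ha, hb, hle'⟩ | ⟨a', b', ha, hb, _⟩
      · rw [Equiv.apply_symm_apply] at ha hb
        obtain rfl : a' = a := (Sum.inl.inj ha).symm
        obtain rfl : b' = b := (Sum.inl.inj hb).symm
        exact hle hle'
      · rw [Equiv.apply_symm_apply] at ha
        exact Sum.inl_ne_inr ha
    have hDsupp : ∀ a b, ¬ P₂.le a b → D a b = 0 := by
      intro a b hle
      rw [hDdef]
      simp only [Matrix.submatrix_apply]
      apply hN.2
      intro hPle
      rcases (hchar _ _).mp hPle with ⟨a', b', ha, hb, _⟩ | ⟨a', b', ha, hb, hle'⟩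
      · rw [Equiv.apply_symm_apply] at ha
        exact Sum.inr_ne_inl ha
      · rw [Equiv.apply_symm_apply] at ha hb
        obtain rfl : a' = a := (Sum.inr.inj ha).symm
        obtain rfl : b' = b := (Sum.inr.inj hb).symm
        exact hle hle'
    have hM₁mem : M₁ ∈ gA P₁ := by
      constructor
      · rw [hM₁, Matrix.trace_sub, Matrix.trace_smul, Matrix.trace_smul, Matrix.trace_one,
          Fintype.card_fin]
        simp only [smul_eq_mul, ht]
        field_simp
        ring
      · intro a b hle
        have hab : a ≠ b := fun h => hle (h ▸ P₁.le_refl a)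
        rw [hM₁]
        simp [Matrix.sub_apply, Matrix.smul_apply, Matrix.one_apply_ne hab, hAsupp a b hle]
    have hM₂mem : M₂ ∈ gA P₂ := by
      constructor
      · rw [hM₂, Matrix.trace_sub, Matrix.trace_smul, Matrix.trace_smul, Matrix.trace_one,
          Fintype.card_fin]
        have hDA : Matrix.trace D = - Matrix.trace A := by linear_combination htrN
        rw [hDA, ht]
        simp only [smul_eq_mul]
        field_simp
        ring
      · intro a b hle
        have hab : a ≠ b := fun h => hle (h ▸ P₂.le_refl a)
        rw [hM₂]
        simp [Matrix.sub_apply, Matrix.smul_apply, Matrix.one_apply_ne hab, hDsupp a b hle]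
    refine ⟨(⟨M₁, hM₁mem⟩, ⟨M₂, hM₂mem⟩, t), ?_⟩
    apply Subtype.ext
    show bm e M₁ 0 + bm e 0 M₂ + t • bm e ((m₂:ℂ) • 1) (-(m₁:ℂ) • 1) = N
    rw [bm_comb, hM₁, hM₂, sub_add_cancel, sub_add_cancel, ← hblk]

end Inst2

section Final
open Module

lemma inst_iff {n m₁ m₂ : ℕ} (e : Fin n ≃ (Fin m₁ ⊕ Fin m₂))
    {P : FinPoset n} {P₁ : FinPoset m₁} {P₂ : FinPoset m₂}
    (hchar : ∀ i j : Fin n, P.le i j ↔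
      ((∃ a b, e i = Sum.inl a ∧ e j = Sum.inl b ∧ P₁.le a b) ∨
        (∃ a b, e i = Sum.inr a ∧ e j = Sum.inr b ∧ P₂.le a b)))
    (h₁ : 0 < m₁) (h₂ : 0 < m₂) :
    IsContact ↥(gA P) ↔
      (∃ φ : Module.Dual ℂ ↥(gA P₁), ∀ x : ↥(gA P₁), (∀ y, φ ⁅x, y⁆ = 0) → x = 0) ∧
      (∃ φ : Module.Dual ℂ ↥(gA P₂), ∀ x : ↥(gA P₂), (∀ y, φ ⁅x, y⁆ = 0) → x = 0) :=
  main_split (theta1 e hchar) (theta2 e hchar) (zel e hchar)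
    (theta1_bracket e hchar) (theta2_bracket e hchar) (theta_cross e hchar)
    (zel_central e hchar) (F_bij e hchar h₁ h₂)

lemma reach_aux {n : ℕ} (P : FinPoset n) :
    ∀ d : ℕ, ∀ i j : Fin n, j.val - i.val ≤ d → P.le i j → (hasse P).Reachable i j := by
  intro d
  induction d with
  | zero =>
    intro i j hd hP
    have h1 : i.val ≤ j.val := P.le_compat i j hP
    have hij : i = j := Fin.ext (by omega)
    subst hij
    exact SimpleGraph.Reachable.refl _
  | succ d ih =>
    intro i j hd hP
    by_cases hij : i = j
    · subst hij; exact SimpleGraph.Reachable.refl _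
    · by_cases hcov : ∃ k, P.lt i k ∧ P.lt k j
      · obtain ⟨k, hik, hkj⟩ := hcov
        have h1 : i.val ≤ k.val := P.le_compat i k hik.1
        have h2 : k.val ≤ j.val := P.le_compat k j hkj.1
        have h3 : i.val ≠ k.val := fun h => hik.2 (Fin.ext h)
        have h4 : k.val ≠ j.val := fun h => hkj.2 (Fin.ext h)
        have r1 := ih i k (by omega) hik.1
        have r2 := ih k j (by omega) hkj.1
        exact r1.trans r2
      · have hadj : (hasse P).Adj i j := by
          apply (SimpleGraph.fromRel_adj _ i j).mpr
          exact ⟨hij, Or.inl ⟨⟨hP, hij⟩, fun k hc => hcov ⟨k, hc⟩⟩⟩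
        exact hadj.reachable

lemma reach_of_le {n : ℕ} (P : FinPoset n) (i j : Fin n) (h : P.le i j) :
    (hasse P).Reachable i j :=
  reach_aux P (j.val - i.val) i j le_rfl h

/-- the induced poset on a finset. -/
def subPoset {n : ℕ} (P : FinPoset n) (S : Finset (Fin n)) {m : ℕ} (h : S.card = m) :
    FinPoset m where
  le a b := P.le ↑(S.orderIsoOfFin h a) ↑(S.orderIsoOfFin h b)
  le_refl a := P.le_refl _
  le_antisymm a b hab hba :=
    (S.orderIsoOfFin h).injective (Subtype.ext (P.le_antisymm _ _ hab hba))
  le_trans a b c hab hbc := P.le_trans _ _ _ hab hbc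
  le_compat a b hab := by
    have h1 : (S.orderIsoOfFin h a : Fin n) ≤ ↑(S.orderIsoOfFin h b) := P.le_compat _ _ hab
    exact (S.orderIsoOfFin h).le_iff_le.mp (Subtype.coe_le_coe.mp h1)

end Final

/-- a disconnected poset of height at most two yields a contact algebra
iff it is the disjoint sum of two Frobenius posets. -/
theorem stmt4 {n : ℕ} (P : FinPoset n)
    (hdis : ¬ (hasse P).Preconnected)
    (hht : ¬ hasChain P 4) :
    IsContact ↥(gA P) ↔
      ∃ (m₁ m₂ : ℕ) (P₁ : FinPoset m₁) (P₂ : FinPoset m₂) (e : Fin n ≃ (Fin m₁ ⊕ Fin m₂)),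
        0 < m₁ ∧ 0 < m₂ ∧
        (∀ i j : Fin n, P.le i j ↔
          ((∃ a b, e i = Sum.inl a ∧ e j = Sum.inl b ∧ P₁.le a b) ∨
            (∃ a b, e i = Sum.inr a ∧ e j = Sum.inr b ∧ P₂.le a b))) ∧
        lieIndex ↥(gA P₁) = 0 ∧ lieIndex ↥(gA P₂) = 0 := by
  classical
  constructor
  · intro hcon
    unfold SimpleGraph.Preconnected at hdis
    push_neg at hdis
    obtain ⟨u, v, huv⟩ := hdis
    set S : Finset (Fin n) := Finset.univ.filter (fun i => (hasse P).Reachable u i) with hSdef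
    have hmemS : ∀ i, i ∈ S ↔ (hasse P).Reachable u i := by
      intro i; simp [hSdef]
    let ι₁ := S.orderIsoOfFin rfl
    let ι₂ := Sᶜ.orderIsoOfFin rfl
    let P₁ := subPoset P S rfl
    let P₂ := subPoset P Sᶜ rfl
    let eqv : Fin n ≃ (Fin S.card ⊕ Fin Sᶜ.card) :=
      (Equiv.sumCompl (fun i => i ∈ S)).symm.trans
        (Equiv.sumCongr ι₁.toEquiv.symm
          ((Equiv.subtypeEquivRight (fun x => (Finset.mem_compl (s := S) (a := x)).symm)).trans
            ι₂.toEquiv.symm))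
    have heval₁ : ∀ (i : Fin n) (hi : i ∈ S), eqv i = Sum.inl (ι₁.toEquiv.symm ⟨i, hi⟩) := by
      intro i hi
      show (Equiv.sumCongr _ _) ((Equiv.sumCompl (fun i => i ∈ S)).symm i) = _
      rw [Equiv.sumCompl_symm_apply_of_pos hi]
      rfl
    have heval₂ : ∀ (i : Fin n) (hi : i ∉ S),
        eqv i = Sum.inr (ι₂.toEquiv.symm ⟨i, Finset.mem_compl.mpr hi⟩) := by
      intro i hi
      show (Equiv.sumCongr _ _) ((Equiv.sumCompl (fun i => i ∈ S)).symm i) = _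
      rw [Equiv.sumCompl_symm_apply_of_neg hi]
      rfl
    have hS₁ : ∀ a : Fin S.card, eqv ↑(ι₁ a) = Sum.inl a := by
      intro a
      rw [heval₁ _ (ι₁ a).2]
      congr 1
      have h1 : (⟨↑(ι₁ a), (ι₁ a).2⟩ : {x // x ∈ S}) = ι₁ a := Subtype.ext rfl
      rw [h1]
      exact ι₁.toEquiv.symm_apply_apply a
    have hS₂ : ∀ a : Fin Sᶜ.card, eqv ↑(ι₂ a) = Sum.inr a := by
      intro a
      rw [heval₂ _ (Finset.mem_compl.mp (ι₂ a).2)]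
      congr 1
      have h1 : (⟨↑(ι₂ a), Finset.mem_compl.mpr (Finset.mem_compl.mp (ι₂ a).2)⟩ :
          {x // x ∈ Sᶜ}) = ι₂ a := Subtype.ext rfl
      rw [h1]
      exact ι₂.toEquiv.symm_apply_apply a
    have hιx₁ : ∀ x : {y // y ∈ S}, (↑(ι₁ (ι₁.toEquiv.symm x)) : Fin n) = ↑x := by
      intro x
      exact congrArg Subtype.val (ι₁.toEquiv.apply_symm_apply x)
    have hιx₂ : ∀ x : {y // y ∈ Sᶜ}, (↑(ι₂ (ι₂.toEquiv.symm x)) : Fin n) = ↑x := by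
      intro x
      exact congrArg Subtype.val (ι₂.toEquiv.apply_symm_apply x)
    have hm₁pos : 0 < S.card :=
      Finset.card_pos.mpr ⟨u, (hmemS u).mpr (SimpleGraph.Reachable.refl u)⟩
    have hm₂pos : 0 < Sᶜ.card :=
      Finset.card_pos.mpr ⟨v, Finset.mem_compl.mpr (fun hv => huv ((hmemS v).mp hv))⟩
    have hchar : ∀ i j : Fin n, P.le i j ↔
        ((∃ a b, eqv i = Sum.inl a ∧ eqv j = Sum.inl b ∧ P₁.le a b) ∨
          (∃ a b, eqv i = Sum.inr a ∧ eqv j = Sum.inr b ∧ P₂.le a b)) := by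
      intro i j
      constructor
      · intro hle
        have hr := reach_of_le P i j hle
        by_cases hi : i ∈ S
        · have hj : j ∈ S := (hmemS j).mpr (((hmemS i).mp hi).trans hr)
          refine Or.inl ⟨ι₁.toEquiv.symm ⟨i, hi⟩, ι₁.toEquiv.symm ⟨j, hj⟩,
            heval₁ i hi, heval₁ j hj, ?_⟩
          show P.le ↑(ι₁ (ι₁.toEquiv.symm ⟨i, hi⟩)) ↑(ι₁ (ι₁.toEquiv.symm ⟨j, hj⟩))
          rw [hιx₁, hιx₁]
          exact hle
        · have hj : j ∉ S := fun hj =>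
            hi ((hmemS i).mpr (((hmemS j).mp hj).trans hr.symm))
          refine Or.inr ⟨ι₂.toEquiv.symm ⟨i, Finset.mem_compl.mpr hi⟩,
            ι₂.toEquiv.symm ⟨j, Finset.mem_compl.mpr hj⟩, heval₂ i hi, heval₂ j hj, ?_⟩
          show P.le ↑(ι₂ (ι₂.toEquiv.symm ⟨i, Finset.mem_compl.mpr hi⟩))
            ↑(ι₂ (ι₂.toEquiv.symm ⟨j, Finset.mem_compl.mpr hj⟩))
          rw [hιx₂, hιx₂]
          exact hle
      · rintro (⟨a, b, ha, hb, hab⟩ | ⟨a, b, ha, hb, hab⟩)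
        · have hia : i = ↑(ι₁ a) := by
            apply eqv.injective
            rw [ha, hS₁]
          have hjb : j = ↑(ι₁ b) := by
            apply eqv.injective
            rw [hb, hS₁]
          rw [hia, hjb]
          exact hab
        · have hia : i = ↑(ι₂ a) := by
            apply eqv.injective
            rw [ha, hS₂]
          have hjb : j = ↑(ι₂ b) := by
            apply eqv.injective
            rw [hb, hS₂]
          rw [hia, hjb]
          exact hab
    obtain ⟨c₁, c₂⟩ := (inst_iff eqv hchar hm₁pos hm₂pos).mp hcon
    exact ⟨S.card, Sᶜ.card, P₁, P₂, eqv, hm₁pos, hm₂pos, hchar,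
      frob_iff.mpr c₁, frob_iff.mpr c₂⟩
  · rintro ⟨m₁, m₂, P₁, P₂, e, h₁, h₂, hchar, hI₁, hI₂⟩
    exact (inst_iff e hchar h₁ h₂).mpr ⟨frob_iff.mp hI₁, frob_iff.mp hI₂⟩
end

section
/- Let P be a connected finite poset of height two such that g_A(P) is contact. Then no i ∈ P \ Ext(P) satisfies (D(P,i), U(P,i)) = (1,3) or (D(P,i), U(P,i)) = (3,1); equivalently, for no i ∈ P \ Ext(P) is P^i isomorphic to P(1,1,3) or P(3,1,1). -/
open Matrix

attribute [local instance 100] LieRing.ofAssociativeRing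

section AuxLemmas

open Matrix

namespace FinPoset

lemma lt_le {n : ℕ} {P : FinPoset n} {i j k : Fin n}
    (h1 : P.lt i j) (h2 : P.le j k) : P.lt i k := by
  refine ⟨P.le_trans _ _ _ h1.1 h2, ?_⟩
  rintro rfl
  exact h1.2 (P.le_antisymm _ _ h1.1 h2)

lemma le_lt {n : ℕ} {P : FinPoset n} {i j k : Fin n}
    (h1 : P.le i j) (h2 : P.lt j k) : P.lt i k := by
  refine ⟨P.le_trans _ _ _ h1 h2.1, ?_⟩
  rintro rfl
  exact h2.2 (P.le_antisymm _ _ h2.1 h1)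

end FinPoset

lemma std_mem {n : ℕ} {P : FinPoset n} {u v : Fin n} (huv : P.le u v) (hne : u ≠ v) :
    Matrix.single u v (1 : ℂ) ∈ gA P := by
  refine ⟨Matrix.trace_single_eq_of_ne _ _ _ hne, ?_⟩
  intro r s hrs
  apply Matrix.single_apply_of_ne
  rintro ⟨rfl, rfl⟩
  exact hrs huv

/-- right-multiplying `E_{u q}` by `y` when `q` is maximal. -/
lemma mul_lem1 {n : ℕ} {P : FinPoset n} {q : Fin n} (hq : ∀ v, P.le q v → v = q)
    {y : Matrix (Fin n) (Fin n) ℂ} (hy : ∀ r s, ¬ P.le r s → y r s = 0) (u : Fin n) :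
    Matrix.single u q (1 : ℂ) * y = y q q • Matrix.single u q 1 := by
  ext r s
  by_cases hr : r = u
  · subst hr
    rw [Matrix.single_mul_apply_same, one_mul, Matrix.smul_apply]
    by_cases hs : s = q
    · subst hs; simp
    · rw [hy q s (fun h => hs (hq s h))]
      simp [hs, Ne.symm hs]
  · simp [hr, Ne.symm hr]

/-- left-multiplying `E_{q u}` by `y` when `q` is minimal. -/
lemma mul_lem2 {n : ℕ} {P : FinPoset n} {q : Fin n} (hq : ∀ k, P.le k q → k = q)
    {y : Matrix (Fin n) (Fin n) ℂ} (hy : ∀ r s, ¬ P.le r s → y r s = 0) (u : Fin n) :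
    y * Matrix.single q u (1 : ℂ) = y q q • Matrix.single q u 1 := by
  ext r s
  by_cases hs : s = u
  · subst hs
    rw [Matrix.mul_single_apply_same, mul_one, Matrix.smul_apply]
    by_cases hr : r = q
    · subst hr; simp
    · rw [hy r q (fun h => hr (hq r h))]
      simp [hr, Ne.symm hr]
  · simp [hs, Ne.symm hs]

/-- left-multiplying `E_{u q}` by `y` when the elements below `u` are `u` and `w`. -/
lemma mul_lem3 {n : ℕ} {P : FinPoset n} {u w : Fin n}
    (hu : ∀ k, P.le k u → k = u ∨ k = w) (hwu : w ≠ u)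
    {y : Matrix (Fin n) (Fin n) ℂ} (hy : ∀ r s, ¬ P.le r s → y r s = 0) (q : Fin n) :
    y * Matrix.single u q (1 : ℂ)
      = y u u • Matrix.single u q 1 + y w u • Matrix.single w q 1 := by
  ext r s
  rw [Matrix.add_apply, Matrix.smul_apply, Matrix.smul_apply]
  by_cases hs : s = q
  · subst hs
    rw [Matrix.mul_single_apply_same, mul_one]
    by_cases hr1 : r = u
    · subst hr1; simp [hwu]
    · by_cases hr2 : r = w
      · subst hr2; simp [hwu, Ne.symm hwu]
      · rw [hy r u (fun h => by rcases hu r h with h' | h' <;> [exact hr1 h'; exact hr2 h'])]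
        simp [hr1, hr2, Ne.symm hr1, Ne.symm hr2]
  · simp [hs, Ne.symm hs]

/-- right-multiplying `E_{q u}` by `y` when the elements above `u` are `u` and `w`. -/
lemma mul_lem4 {n : ℕ} {P : FinPoset n} {u w : Fin n}
    (hu : ∀ s, P.le u s → s = u ∨ s = w) (hwu : w ≠ u)
    {y : Matrix (Fin n) (Fin n) ℂ} (hy : ∀ r s, ¬ P.le r s → y r s = 0) (q : Fin n) :
    Matrix.single q u (1 : ℂ) * y
      = y u u • Matrix.single q u 1 + y u w • Matrix.single q w 1 := by
  ext r s
  rw [Matrix.add_apply, Matrix.smul_apply, Matrix.smul_apply]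
  by_cases hr : r = q
  · subst hr
    rw [Matrix.single_mul_apply_same, one_mul]
    by_cases hs1 : s = u
    · subst hs1; simp [hwu]
    · by_cases hs2 : s = w
      · subst hs2; simp [hwu, Ne.symm hwu]
      · rw [hy u s (fun h => by rcases hu s h with h' | h' <;> [exact hs1 h'; exact hs2 h'])]
        simp [hs1, hs2, Ne.symm hs1, Ne.symm hs2]
  · simp [hr, Ne.symm hr]

/-- If some nonzero `x` is killed by `φ` and by the Kirillov form of `φ`,
then `φ` is not a contact form. -/
lemma hatB_singular {g : Type*} [LieRing g] [LieAlgebra ℂ g] (φ : Module.Dual ℂ g)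
    (x : g) (hx : x ≠ 0) (hφx : φ x = 0) (hker : ∀ y, φ ⁅x, y⁆ = 0) :
    ¬ IsContactForm g φ := by
  rintro ⟨k, E, hdet⟩
  apply hdet
  rw [← Matrix.exists_vecMul_eq_zero_iff]
  refine ⟨Fin.cases 0 (fun b => E.repr x b), ?_, ?_⟩
  · obtain ⟨b, hb⟩ : ∃ b, E.repr x b ≠ 0 := by
      by_contra hcon
      push_neg at hcon
      apply hx
      have h0 : E.repr x = 0 := by
        ext b; exact hcon b
      have : E.repr x = E.repr 0 := by simp [h0]
      exact E.repr.injective this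
    intro h0
    apply hb
    have := congrFun h0 b.succ
    simpa using this
  · funext j
    have hvm : (Fin.cases 0 (fun b => E.repr x b) ᵥ* hatB (⇑E) φ) j
        = ∑ i : Fin (2 * k + 1), E.repr x i * hatB (⇑E) φ i.succ j := by
      rw [Matrix.vecMul, dotProduct, Fin.sum_univ_succ]
      simp
    rw [Pi.zero_apply, hvm]
    induction j using Fin.cases with
    | zero =>
      have hent : ∀ i : Fin (2 * k + 1), hatB (⇑E) φ i.succ 0 = -(φ (E i)) := by
        intro i
        simp [hatB]
      have h1 : φ x = ∑ b, E.repr x b * φ (E b) := by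
        conv_lhs => rw [← E.sum_repr x]
        rw [map_sum]
        simp [smul_eq_mul]
      simp only [hent, mul_neg]
      rw [Finset.sum_neg_distrib, ← h1, hφx, neg_zero]
    | succ j' =>
      have hent : ∀ i : Fin (2 * k + 1), hatB (⇑E) φ i.succ j'.succ = φ ⁅E i, E j'⁆ := by
        intro i
        simp [hatB]
      let L : g →ₗ[ℂ] ℂ :=
        { toFun := fun z => φ ⁅z, E j'⁆
          map_add' := fun a b => by simp [add_lie]
          map_smul' := fun c a => by simp [smul_lie] }
      have h2 : φ ⁅x, E j'⁆ = ∑ b, E.repr x b * φ ⁅E b, E j'⁆ := by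
        show L x = ∑ b, E.repr x b * L (E b)
        conv_lhs => rw [← E.sum_repr x]
        rw [map_sum]
        simp [smul_eq_mul]
      simp only [hent]
      rw [← h2, hker]

/-- Abstract configuration forcing non-contactness: six elements `e p, f p` whose
brackets with any `y` have the given triangular shape, and which are linearly
independent. -/
lemma not_contact_of_config {g : Type*} [LieRing g] [LieAlgebra ℂ g]
    (e f : Fin 3 → g)
    (hbr : ∀ y : g, ∃ (t : Fin 3 → ℂ) (u v d : ℂ),
      (∀ p, ⁅e p, y⁆ = (t p - u) • e p + d • f p) ∧ (∀ p, ⁅f p, y⁆ = (t p - v) • f p))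
    (hne : ∀ α β : Fin 3 → ℂ,
      α 0 • e 0 + α 1 • e 1 + α 2 • e 2 + β 0 • f 0 + β 1 • f 1 + β 2 • f 2 = 0 →
      α = 0 ∧ β = 0) :
    ¬ IsContact g := by
  rintro ⟨φ, hφ⟩
  have hdet : (!![φ (e 0), 0, 0, φ (f 0), 0, 0;
       0, φ (e 1), 0, 0, φ (f 1), 0;
       0, 0, φ (e 2), 0, 0, φ (f 2);
       φ (e 0), φ (e 1), φ (e 2), 0, 0, 0;
       φ (f 0), φ (f 1), φ (f 2), 0, 0, 0;
       (0 : ℂ), 0, 0, 0, 0, 0]).det = 0 :=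
    Matrix.det_eq_zero_of_row_eq_zero 5 (by intro j; fin_cases j <;> rfl)
  obtain ⟨w, hw0, hw⟩ := Matrix.exists_mulVec_eq_zero_iff.mpr hdet
  have hE0 : φ (e 0) * w 0 + 0 * w 1 + 0 * w 2 + φ (f 0) * w 3 + 0 * w 4 + 0 * w 5 = 0 := by
    have h := congrFun hw 0
    rw [Matrix.mulVec, dotProduct, Fin.sum_univ_six] at h
    exact h
  have hE1 : 0 * w 0 + φ (e 1) * w 1 + 0 * w 2 + 0 * w 3 + φ (f 1) * w 4 + 0 * w 5 = 0 := by
    have h := congrFun hw 1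
    rw [Matrix.mulVec, dotProduct, Fin.sum_univ_six] at h
    exact h
  have hE2 : 0 * w 0 + 0 * w 1 + φ (e 2) * w 2 + 0 * w 3 + 0 * w 4 + φ (f 2) * w 5 = 0 := by
    have h := congrFun hw 2
    rw [Matrix.mulVec, dotProduct, Fin.sum_univ_six] at h
    exact h
  have hE3 : φ (e 0) * w 0 + φ (e 1) * w 1 + φ (e 2) * w 2 + 0 * w 3 + 0 * w 4 + 0 * w 5 = 0 := by
    have h := congrFun hw 3
    rw [Matrix.mulVec, dotProduct, Fin.sum_univ_six] at h
    exact h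
  have hE4 : φ (f 0) * w 0 + φ (f 1) * w 1 + φ (f 2) * w 2 + 0 * w 3 + 0 * w 4 + 0 * w 5 = 0 := by
    have h := congrFun hw 4
    rw [Matrix.mulVec, dotProduct, Fin.sum_univ_six] at h
    exact h
  have h0 : φ (e 0) * w 0 + φ (f 0) * w 3 = 0 := by linear_combination hE0
  have h1 : φ (e 1) * w 1 + φ (f 1) * w 4 = 0 := by linear_combination hE1
  have h2 : φ (e 2) * w 2 + φ (f 2) * w 5 = 0 := by linear_combination hE2
  have h3 : φ (e 0) * w 0 + φ (e 1) * w 1 + φ (e 2) * w 2 = 0 := by linear_combination hE3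
  have h4 : φ (f 0) * w 0 + φ (f 1) * w 1 + φ (f 2) * w 2 = 0 := by linear_combination hE4
  set x : g := w 0 • e 0 + w 1 • e 1 + w 2 • e 2 + w 3 • f 0 + w 4 • f 1 + w 5 • f 2 with hxdef
  have hx : x ≠ 0 := by
    intro hx0
    obtain ⟨hα, hβ⟩ := hne ![w 0, w 1, w 2] ![w 3, w 4, w 5] (by simpa using hx0)
    apply hw0
    funext r
    fin_cases r
    · simpa using congrFun hα 0
    · simpa using congrFun hα 1
    · simpa using congrFun hα 2
    · simpa using congrFun hβ 0
    · simpa using congrFun hβ 1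
    · simpa using congrFun hβ 2
  have hφx : φ x = 0 := by
    rw [hxdef]
    simp only [map_add, _root_.map_smul, smul_eq_mul]
    linear_combination h0 + h1 + h2
  have hk : ∀ y, φ ⁅x, y⁆ = 0 := by
    intro y
    obtain ⟨t, u, v, d, hbe, hbf⟩ := hbr y
    have hlie : ⁅x, y⁆ = w 0 • ⁅e 0, y⁆ + w 1 • ⁅e 1, y⁆ + w 2 • ⁅e 2, y⁆
        + w 3 • ⁅f 0, y⁆ + w 4 • ⁅f 1, y⁆ + w 5 • ⁅f 2, y⁆ := by
      rw [hxdef]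
      simp only [add_lie, smul_lie]
    rw [hlie, hbe 0, hbe 1, hbe 2, hbf 0, hbf 1, hbf 2]
    simp only [map_add, _root_.map_smul, smul_eq_mul]
    linear_combination (t 0 - v) * h0 + (t 1 - v) * h1 + (t 2 - v) * h2
      + (v - u) * h3 + d * h4
  exact hatB_singular φ x hx hφx hk hφ

end AuxLemmas

/-- Key lemma, case `(D,U) = (1,3)`. -/
lemma key13 {n : ℕ} (P : FinPoset n) (i j : Fin n) (a : Fin 3 → Fin n)
    (hainj : Function.Injective a)
    (hji : P.lt j i) (hip : ∀ p, P.lt i (a p))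
    (hmax : ∀ p v, P.le (a p) v → v = a p)
    (hbi : ∀ k, P.le k i → k = i ∨ k = j)
    (hbj : ∀ k, P.le k j → k = j) :
    ¬ IsContact ↥(gA P) := by
  have hji' : j ≠ i := hji.2
  have hij' : i ≠ j := Ne.symm hji'
  have hja : ∀ p, P.lt j (a p) := fun p => FinPoset.lt_le hji (hip p).1
  have h01 : a 0 ≠ a 1 := fun h => (by decide : (0 : Fin 3) ≠ 1) (hainj h)
  have h02 : a 0 ≠ a 2 := fun h => (by decide : (0 : Fin 3) ≠ 2) (hainj h)
  have h12 : a 1 ≠ a 2 := fun h => (by decide : (1 : Fin 3) ≠ 2) (hainj h)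
  let e : Fin 3 → ↥(gA P) := fun p =>
    ⟨Matrix.single i (a p) 1, std_mem (hip p).1 (hip p).2⟩
  let f : Fin 3 → ↥(gA P) := fun p =>
    ⟨Matrix.single j (a p) 1, std_mem (hja p).1 (hja p).2⟩
  apply not_contact_of_config e f
  · intro y
    have hy2 : ∀ r s, ¬ P.le r s → y.1 r s = 0 := y.2.2
    refine ⟨fun p => y.1 (a p) (a p), y.1 i i, y.1 j j, -(y.1 j i),
      fun p => ?_, fun p => ?_⟩
    · apply Subtype.ext
      show ⁅(Matrix.single i (a p) 1 : Matrix (Fin n) (Fin n) ℂ),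
          (y.1 : Matrix (Fin n) (Fin n) ℂ)⁆
          = (y.1 (a p) (a p) - y.1 i i) • Matrix.single i (a p) 1
            + (-(y.1 j i)) • Matrix.single j (a p) 1
      rw [Ring.lie_def, mul_lem1 (hmax p) hy2, mul_lem3 hbi hji' hy2,
        sub_smul, neg_smul]
      abel
    · apply Subtype.ext
      show ⁅(Matrix.single j (a p) 1 : Matrix (Fin n) (Fin n) ℂ),
          (y.1 : Matrix (Fin n) (Fin n) ℂ)⁆
          = (y.1 (a p) (a p) - y.1 j j) • Matrix.single j (a p) 1
      rw [Ring.lie_def, mul_lem1 (hmax p) hy2, mul_lem2 hbj hy2, sub_smul]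
  · intro α β hsum
    have hval : (α 0 • Matrix.single i (a 0) (1 : ℂ)
        + α 1 • Matrix.single i (a 1) 1
        + α 2 • Matrix.single i (a 2) 1
        + β 0 • Matrix.single j (a 0) 1
        + β 1 • Matrix.single j (a 1) 1
        + β 2 • Matrix.single j (a 2) 1 : Matrix (Fin n) (Fin n) ℂ) = 0 :=
      congrArg Subtype.val hsum
    constructor
    · funext q
      fin_cases q
      · simpa [h01, h02, h12, Ne.symm h01, Ne.symm h02, Ne.symm h12, hij', hji']
          using congrFun (congrFun hval i) (a 0)
      · simpa [h01, h02, h12, Ne.symm h01, Ne.symm h02, Ne.symm h12, hij', hji']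
          using congrFun (congrFun hval i) (a 1)
      · simpa [h01, h02, h12, Ne.symm h01, Ne.symm h02, Ne.symm h12, hij', hji']
          using congrFun (congrFun hval i) (a 2)
    · funext q
      fin_cases q
      · simpa [h01, h02, h12, Ne.symm h01, Ne.symm h02, Ne.symm h12, hij', hji']
          using congrFun (congrFun hval j) (a 0)
      · simpa [h01, h02, h12, Ne.symm h01, Ne.symm h02, Ne.symm h12, hij', hji']
          using congrFun (congrFun hval j) (a 1)
      · simpa [h01, h02, h12, Ne.symm h01, Ne.symm h02, Ne.symm h12, hij', hji']
          using congrFun (congrFun hval j) (a 2)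

/-- Key lemma, case `(D,U) = (3,1)`. -/
lemma key31 {n : ℕ} (P : FinPoset n) (i j : Fin n) (a : Fin 3 → Fin n)
    (hainj : Function.Injective a)
    (hij : P.lt i j) (hai : ∀ p, P.lt (a p) i)
    (hmin : ∀ p v, P.le v (a p) → v = a p)
    (hui : ∀ k, P.le i k → k = i ∨ k = j)
    (huj : ∀ k, P.le j k → k = j) :
    ¬ IsContact ↥(gA P) := by
  have hij' : i ≠ j := hij.2
  have hji' : j ≠ i := Ne.symm hij'
  have haj : ∀ p, P.lt (a p) j := fun p => FinPoset.le_lt (hai p).1 hij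
  have h01 : a 0 ≠ a 1 := fun h => (by decide : (0 : Fin 3) ≠ 1) (hainj h)
  have h02 : a 0 ≠ a 2 := fun h => (by decide : (0 : Fin 3) ≠ 2) (hainj h)
  have h12 : a 1 ≠ a 2 := fun h => (by decide : (1 : Fin 3) ≠ 2) (hainj h)
  let e : Fin 3 → ↥(gA P) := fun p =>
    ⟨Matrix.single (a p) i 1, std_mem (hai p).1 (hai p).2⟩
  let f : Fin 3 → ↥(gA P) := fun p =>
    ⟨Matrix.single (a p) j 1, std_mem (haj p).1 (haj p).2⟩
  apply not_contact_of_config e f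
  · intro y
    have hy2 : ∀ r s, ¬ P.le r s → y.1 r s = 0 := y.2.2
    refine ⟨fun p => -(y.1 (a p) (a p)), -(y.1 i i), -(y.1 j j), y.1 i j,
      fun p => ?_, fun p => ?_⟩
    · apply Subtype.ext
      show ⁅(Matrix.single (a p) i 1 : Matrix (Fin n) (Fin n) ℂ),
          (y.1 : Matrix (Fin n) (Fin n) ℂ)⁆
          = (-(y.1 (a p) (a p)) - -(y.1 i i)) • Matrix.single (a p) i 1
            + (y.1 i j) • Matrix.single (a p) j 1
      rw [Ring.lie_def, mul_lem4 hui hji' hy2, mul_lem2 (hmin p) hy2,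
        sub_smul, neg_smul, neg_smul]
      abel
    · apply Subtype.ext
      show ⁅(Matrix.single (a p) j 1 : Matrix (Fin n) (Fin n) ℂ),
          (y.1 : Matrix (Fin n) (Fin n) ℂ)⁆
          = (-(y.1 (a p) (a p)) - -(y.1 j j)) • Matrix.single (a p) j 1
      rw [Ring.lie_def, mul_lem1 huj hy2, mul_lem2 (hmin p) hy2,
        sub_smul, neg_smul, neg_smul]
      abel
  · intro α β hsum
    have hval : (α 0 • Matrix.single (a 0) i (1 : ℂ)
        + α 1 • Matrix.single (a 1) i 1
        + α 2 • Matrix.single (a 2) i 1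
        + β 0 • Matrix.single (a 0) j 1
        + β 1 • Matrix.single (a 1) j 1
        + β 2 • Matrix.single (a 2) j 1 : Matrix (Fin n) (Fin n) ℂ) = 0 :=
      congrArg Subtype.val hsum
    constructor
    · funext q
      fin_cases q
      · simpa [h01, h02, h12, Ne.symm h01, Ne.symm h02, Ne.symm h12, hij', hji']
          using congrFun (congrFun hval (a 0)) i
      · simpa [h01, h02, h12, Ne.symm h01, Ne.symm h02, Ne.symm h12, hij', hji']
          using congrFun (congrFun hval (a 1)) i
      · simpa [h01, h02, h12, Ne.symm h01, Ne.symm h02, Ne.symm h12, hij', hji']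
          using congrFun (congrFun hval (a 2)) i
    · funext q
      fin_cases q
      · simpa [h01, h02, h12, Ne.symm h01, Ne.symm h02, Ne.symm h12, hij', hji']
          using congrFun (congrFun hval (a 0)) j
      · simpa [h01, h02, h12, Ne.symm h01, Ne.symm h02, Ne.symm h12, hij', hji']
          using congrFun (congrFun hval (a 1)) j
      · simpa [h01, h02, h12, Ne.symm h01, Ne.symm h02, Ne.symm h12, hij', hji']
          using congrFun (congrFun hval (a 2)) j

lemma no_four_chain {n : ℕ} {P : FinPoset n} (h : ¬ hasChain P 4) {u v w z : Fin n}
    (h1 : P.lt u v) (h2 : P.lt v w) (h3 : P.lt w z) : False := by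
  have huw : P.lt u w := FinPoset.lt_le h1 h2.1
  have huz : P.lt u z := FinPoset.lt_le huw h3.1
  have hvz : P.lt v z := FinPoset.lt_le h2 h3.1
  apply h
  refine ⟨{u, v, w, z}, ?_, ?_⟩
  · rw [Finset.card_insert_of_notMem (by simp [h1.2, huw.2, huz.2]),
      Finset.card_insert_of_notMem (by simp [h2.2, hvz.2]),
      Finset.card_insert_of_notMem (by simp [h3.2]), Finset.card_singleton]
  · intro x hx y hy
    simp only [Finset.mem_insert, Finset.mem_singleton] at hx hy
    rcases hx with rfl | rfl | rfl | rfl <;> rcases hy with rfl | rfl | rfl | rfl <;>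
      first
        | exact Or.inl (P.le_refl _)
        | exact Or.inl h1.1 | exact Or.inr h1.1
        | exact Or.inl h2.1 | exact Or.inr h2.1
        | exact Or.inl h3.1 | exact Or.inr h3.1
        | exact Or.inl huw.1 | exact Or.inr huw.1
        | exact Or.inl huz.1 | exact Or.inr huz.1
        | exact Or.inl hvz.1 | exact Or.inr hvz.1

/-- in a connected height-two poset with `g_A(P)` contact, no interior
element has `(D(P,i), U(P,i))` equal to `(1,3)` or `(3,1)`. -/
theorem stmt7 {n : ℕ} (P : FinPoset n)
    (hconn : (hasse P).Connected) (hht : heightEq P 2)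
    (hcon : IsContact ↥(gA P)) :
    ∀ i : Fin n, i ∉ extSet P →
      ¬ ((downDeg P i, upDeg P i) = (1, 3) ∨ (downDeg P i, upDeg P i) = (3, 1)) := by
  intro i hiext hdeg
  have hn4 : ∀ u v w z : Fin n, P.lt u v → P.lt v w → P.lt w z → False :=
    fun u v w z h1 h2 h3 => no_four_chain hht.2 h1 h2 h3
  rcases hdeg with hd | hd
  · rw [Prod.mk.injEq] at hd
    obtain ⟨hd1, hd3⟩ := hd
    obtain ⟨j, hj⟩ := Set.ncard_eq_one.mp hd1
    obtain ⟨a0, a1, a2, h01, h02, h12, hset⟩ := Set.ncard_eq_three.mp hd3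
    have hji : P.lt j i := by
      have h : j ∈ {k | P.lt k i} := by rw [hj]; exact Set.mem_singleton j
      exact h
    have ha0 : P.lt i a0 := by
      have h : a0 ∈ {k | P.lt i k} := by rw [hset]; simp
      exact h
    have ha1 : P.lt i a1 := by
      have h : a1 ∈ {k | P.lt i k} := by rw [hset]; simp
      exact h
    have ha2 : P.lt i a2 := by
      have h : a2 ∈ {k | P.lt i k} := by rw [hset]; simp
      exact h
    have hlt : ∀ p : Fin 3, P.lt i (![a0, a1, a2] p) := by
      intro p
      fin_cases p
      · simpa using ha0
      · simpa using ha1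
      · simpa using ha2
    have hainj : Function.Injective ![a0, a1, a2] := by
      intro p q hpq
      fin_cases p <;> fin_cases q <;>
        simp_all [h01, h02, h12, Ne.symm h01, Ne.symm h02, Ne.symm h12]
    have hmax : ∀ (p : Fin 3) v, P.le (![a0, a1, a2] p) v → v = ![a0, a1, a2] p := by
      intro p v hle
      by_contra hne
      exact hn4 j i _ v hji (hlt p) ⟨hle, fun h => hne h.symm⟩
    have hbi : ∀ k, P.le k i → k = i ∨ k = j := by
      intro k hk
      by_cases hki : k = i
      · exact Or.inl hki
      · right
        have h : k ∈ {k' | P.lt k' i} := ⟨hk, hki⟩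
        rw [hj] at h
        exact h
    have hbj : ∀ k, P.le k j → k = j := by
      intro k hk
      by_contra hne
      exact hn4 k j i a0 ⟨hk, hne⟩ hji ha0
    exact key13 P i j ![a0, a1, a2] hainj hji hlt hmax hbi hbj hcon
  · rw [Prod.mk.injEq] at hd
    obtain ⟨hd3, hd1⟩ := hd
    obtain ⟨j, hj⟩ := Set.ncard_eq_one.mp hd1
    obtain ⟨a0, a1, a2, h01, h02, h12, hset⟩ := Set.ncard_eq_three.mp hd3
    have hij : P.lt i j := by
      have h : j ∈ {k | P.lt i k} := by rw [hj]; exact Set.mem_singleton j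
      exact h
    have ha0 : P.lt a0 i := by
      have h : a0 ∈ {k | P.lt k i} := by rw [hset]; simp
      exact h
    have ha1 : P.lt a1 i := by
      have h : a1 ∈ {k | P.lt k i} := by rw [hset]; simp
      exact h
    have ha2 : P.lt a2 i := by
      have h : a2 ∈ {k | P.lt k i} := by rw [hset]; simp
      exact h
    have hlt : ∀ p : Fin 3, P.lt (![a0, a1, a2] p) i := by
      intro p
      fin_cases p
      · simpa using ha0
      · simpa using ha1
      · simpa using ha2
    have hainj : Function.Injective ![a0, a1, a2] := by
      intro p q hpq
      fin_cases p <;> fin_cases q <;>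
        simp_all [h01, h02, h12, Ne.symm h01, Ne.symm h02, Ne.symm h12]
    have hmin : ∀ (p : Fin 3) v, P.le v (![a0, a1, a2] p) → v = ![a0, a1, a2] p := by
      intro p v hle
      by_contra hne
      exact hn4 v _ i j ⟨hle, hne⟩ (hlt p) hij
    have hui : ∀ k, P.le i k → k = i ∨ k = j := by
      intro k hk
      by_cases hki : k = i
      · exact Or.inl hki
      · right
        have h : k ∈ {k' | P.lt i k'} := ⟨hk, fun h => hki h.symm⟩
        rw [hj] at h
        exact h
    have huj : ∀ k, P.le j k → k = j := by
      intro k hk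
      by_contra hne
      exact hn4 a0 i j k ha0 hij ⟨hk, fun h => hne h.symm⟩
    exact key31 P i j ![a0, a1, a2] hainj hij hlt hmin hui huj hcon
end

section
/- If P is a connected finite poset, then the center of the type-A Lie poset algebra g_A(P) is trivial: Z(g_A(P)) = {0}. -/
open Matrix

attribute [local instance 100] LieRing.ofAssociativeRing

section AuxStmt9

open Matrix

variable {n : ℕ} (P : FinPoset n)

lemma Eij_mem {i j : Fin n} (hle : P.le i j) (hne : i ≠ j) :
    Matrix.single i j (1:ℂ) ∈ gA P := by
  refine ⟨Matrix.trace_single_eq_of_ne i j 1 hne, ?_⟩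
  intro a b hab
  simp only [Matrix.single, Matrix.of_apply]
  rw [if_neg]
  rintro ⟨rfl, rfl⟩
  exact hab hle

lemma Dij_mem {i j : Fin n} (hne : i ≠ j) :
    Matrix.single i i (1:ℂ) - Matrix.single j j (1:ℂ) ∈ gA P := by
  refine ⟨by simp, ?_⟩
  intro a b hab
  have hne' : a ≠ b := by rintro rfl; exact hab (P.le_refl a)
  simp only [Matrix.sub_apply, Matrix.single, Matrix.of_apply]
  rw [if_neg, if_neg, sub_zero]
  · rintro ⟨rfl, rfl⟩; exact hne' rfl
  · rintro ⟨rfl, rfl⟩; exact hne' rfl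

end AuxStmt9

/-- for a connected poset, the center of the type-A Lie poset algebra
is trivial. -/

theorem stmt9 {n : ℕ} (P : FinPoset n) (hconn : (hasse P).Connected) :
    ∀ z : ↥(gA P), (∀ y : ↥(gA P), ⁅z, y⁆ = 0) → z = 0 := by
  intro z hz
  have key : ∀ y ∈ gA P,
      (z : Matrix (Fin n) (Fin n) ℂ) * y = y * (z : Matrix (Fin n) (Fin n) ℂ) := by
    intro y hy
    have h1 := hz ⟨y, hy⟩
    have h2 : ((⁅z, (⟨y, hy⟩ : gA P)⁆ : gA P) : Matrix (Fin n) (Fin n) ℂ) = 0 := by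
      rw [h1]; rfl
    rw [LieSubalgebra.coe_bracket, Ring.lie_def] at h2
    exact sub_eq_zero.mp h2
  have offdiag : ∀ a b : Fin n, a ≠ b → (z : Matrix (Fin n) (Fin n) ℂ) a b = 0 := by
    intro a b hab
    have hk := key _ (Dij_mem P (Ne.symm hab))
    have h := congrFun (congrFun hk a) b
    have e1 : (((z : Matrix (Fin n) (Fin n) ℂ) * Matrix.single a a (1:ℂ) :
        Matrix (Fin n) (Fin n) ℂ)) a b = 0 :=
      Matrix.mul_single_apply_of_ne 1 a a a b (Ne.symm hab) _
    have e2 : ((Matrix.single b b (1:ℂ) * (z : Matrix (Fin n) (Fin n) ℂ) :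
        Matrix (Fin n) (Fin n) ℂ)) a b = 0 :=
      Matrix.single_mul_apply_of_ne 1 b b a b hab _
    simp only [Matrix.mul_sub, Matrix.sub_mul, Matrix.sub_apply,
      Matrix.mul_single_apply_same,
      Matrix.single_mul_apply_same, e1, e2,
      mul_one, one_mul, sub_zero, zero_sub] at h
    have h2 : (2:ℂ) * (z : Matrix (Fin n) (Fin n) ℂ) a b = 0 := by linear_combination h
    exact (mul_eq_zero.mp h2).resolve_left two_ne_zero
  have diagadj : ∀ a b : Fin n, (hasse P).Adj a b →
      (z : Matrix (Fin n) (Fin n) ℂ) a a = (z : Matrix (Fin n) (Fin n) ℂ) b b := by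
    have step : ∀ a b : Fin n, P.lt a b →
        (z : Matrix (Fin n) (Fin n) ℂ) a a = (z : Matrix (Fin n) (Fin n) ℂ) b b := by
      intro a b ⟨hle, hne⟩
      have hk := key _ (Eij_mem P hle hne)
      have h := congrFun (congrFun hk a) b
      simpa using h
    intro a b hadj
    rw [hasse, SimpleGraph.fromRel_adj] at hadj
    rcases hadj.2 with ⟨h, _⟩ | ⟨h, _⟩
    · exact step a b h
    · exact (step b a h).symm
  have diagall : ∀ a b : Fin n,
      (z : Matrix (Fin n) (Fin n) ℂ) a a = (z : Matrix (Fin n) (Fin n) ℂ) b b := by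
    intro a b
    obtain ⟨w⟩ := hconn a b
    induction w with
    | nil => rfl
    | cons hadj _ ih => exact (diagadj _ _ hadj).trans ih
  have hne0 : (n : ℂ) ≠ 0 := by
    have : Nonempty (Fin n) := hconn.nonempty
    exact_mod_cast Nat.cast_ne_zero.mpr (Nat.pos_of_ne_zero (by
      rintro rfl
      exact (Fin.elim0 (Classical.arbitrary (Fin 0))))).ne'
  obtain ⟨i0⟩ := hconn.nonempty
  have htr := z.2.1
  have htr2 : (n : ℂ) * (z : Matrix (Fin n) (Fin n) ℂ) i0 i0 = 0 := by
    rw [Matrix.trace] at htr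
    calc (n : ℂ) * (z : Matrix (Fin n) (Fin n) ℂ) i0 i0
        = ∑ _i : Fin n, (z : Matrix (Fin n) (Fin n) ℂ) i0 i0 := by
          simp [Finset.sum_const, mul_comm]
      _ = ∑ i : Fin n, (z : Matrix (Fin n) (Fin n) ℂ) i i :=
          Finset.sum_congr rfl fun i _ => diagall i0 i
      _ = 0 := htr
  have hdiag0 : (z : Matrix (Fin n) (Fin n) ℂ) i0 i0 = 0 :=
    (mul_eq_zero.mp htr2).resolve_left hne0
  apply Subtype.ext
  ext a b
  show (z : Matrix (Fin n) (Fin n) ℂ) a b = 0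
  by_cases hab : a = b
  · subst hab
    rw [diagall a i0, hdiag0]
  · exact offdiag a b hab
end

section
/- Let g be the 7-dimensional complex Lie algebra with basis e_1,…,e_7 whose only nonzero brackets among basis elements (up to skew-symmetry) are [e_1,e_4]=2e_4, [e_2,e_4]=e_4, [e_1,e_5]=e_5, [e_2,e_5]=2e_5, [e_3,e_5]=e_5, [e_1,e_6]=e_6, [e_3,e_6]=e_6, [e_2,e_7]=e_7, and [e_3,e_7]=2e_7. Then ind g = 1, but g is not contact. -/
open Matrix

attribute [local instance] LieRing.ofAssociativeRing

def sC : Matrix (Fin 7) (Fin 7) ℂ :=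
  !![0, 0, 0, 2, 1, 1, 0; 0, 0, 0, 1, 2, 0, 1; 0, 0, 0, 0, 1, 1, 2; -2, -1, 0, 0, 0, 0, 0; -1, -2, -1, 0, 0, 0, 0; -1, 0, -1, 0, 0, 0, 0; 0, -1, -2, 0, 0, 0, 0]

@[simp] lemma sC_0_0 : sC 0 0 = 0 := rfl
@[simp] lemma sC_0_1 : sC 0 1 = 0 := rfl
@[simp] lemma sC_0_2 : sC 0 2 = 0 := rfl
@[simp] lemma sC_0_3 : sC 0 3 = 2 := rfl
@[simp] lemma sC_0_4 : sC 0 4 = 1 := rfl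
@[simp] lemma sC_0_5 : sC 0 5 = 1 := rfl
@[simp] lemma sC_0_6 : sC 0 6 = 0 := rfl
@[simp] lemma sC_1_0 : sC 1 0 = 0 := rfl
@[simp] lemma sC_1_1 : sC 1 1 = 0 := rfl
@[simp] lemma sC_1_2 : sC 1 2 = 0 := rfl
@[simp] lemma sC_1_3 : sC 1 3 = 1 := rfl
@[simp] lemma sC_1_4 : sC 1 4 = 2 := rfl
@[simp] lemma sC_1_5 : sC 1 5 = 0 := rfl
@[simp] lemma sC_1_6 : sC 1 6 = 1 := rfl
@[simp] lemma sC_2_0 : sC 2 0 = 0 := rfl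
@[simp] lemma sC_2_1 : sC 2 1 = 0 := rfl
@[simp] lemma sC_2_2 : sC 2 2 = 0 := rfl
@[simp] lemma sC_2_3 : sC 2 3 = 0 := rfl
@[simp] lemma sC_2_4 : sC 2 4 = 1 := rfl
@[simp] lemma sC_2_5 : sC 2 5 = 1 := rfl
@[simp] lemma sC_2_6 : sC 2 6 = 2 := rfl
@[simp] lemma sC_3_0 : sC 3 0 = (-2) := rfl
@[simp] lemma sC_3_1 : sC 3 1 = (-1) := rfl
@[simp] lemma sC_3_2 : sC 3 2 = 0 := rfl
@[simp] lemma sC_3_3 : sC 3 3 = 0 := rfl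
@[simp] lemma sC_3_4 : sC 3 4 = 0 := rfl
@[simp] lemma sC_3_5 : sC 3 5 = 0 := rfl
@[simp] lemma sC_3_6 : sC 3 6 = 0 := rfl
@[simp] lemma sC_4_0 : sC 4 0 = (-1) := rfl
@[simp] lemma sC_4_1 : sC 4 1 = (-2) := rfl
@[simp] lemma sC_4_2 : sC 4 2 = (-1) := rfl
@[simp] lemma sC_4_3 : sC 4 3 = 0 := rfl
@[simp] lemma sC_4_4 : sC 4 4 = 0 := rfl
@[simp] lemma sC_4_5 : sC 4 5 = 0 := rfl
@[simp] lemma sC_4_6 : sC 4 6 = 0 := rfl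
@[simp] lemma sC_5_0 : sC 5 0 = (-1) := rfl
@[simp] lemma sC_5_1 : sC 5 1 = 0 := rfl
@[simp] lemma sC_5_2 : sC 5 2 = (-1) := rfl
@[simp] lemma sC_5_3 : sC 5 3 = 0 := rfl
@[simp] lemma sC_5_4 : sC 5 4 = 0 := rfl
@[simp] lemma sC_5_5 : sC 5 5 = 0 := rfl
@[simp] lemma sC_5_6 : sC 5 6 = 0 := rfl
@[simp] lemma sC_6_0 : sC 6 0 = 0 := rfl
@[simp] lemma sC_6_1 : sC 6 1 = (-1) := rfl
@[simp] lemma sC_6_2 : sC 6 2 = (-2) := rfl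
@[simp] lemma sC_6_3 : sC 6 3 = 0 := rfl
@[simp] lemma sC_6_4 : sC 6 4 = 0 := rfl
@[simp] lemma sC_6_5 : sC 6 5 = 0 := rfl
@[simp] lemma sC_6_6 : sC 6 6 = 0 := rfl
@[simp] lemma fmax_0_0 : max (0:Fin 7) 0 = 0 := rfl
@[simp] lemma fmax_0_1 : max (0:Fin 7) 1 = 1 := rfl
@[simp] lemma fmax_0_2 : max (0:Fin 7) 2 = 2 := rfl
@[simp] lemma fmax_0_3 : max (0:Fin 7) 3 = 3 := rfl
@[simp] lemma fmax_0_4 : max (0:Fin 7) 4 = 4 := rfl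
@[simp] lemma fmax_0_5 : max (0:Fin 7) 5 = 5 := rfl
@[simp] lemma fmax_0_6 : max (0:Fin 7) 6 = 6 := rfl
@[simp] lemma fmax_1_0 : max (1:Fin 7) 0 = 1 := rfl
@[simp] lemma fmax_1_1 : max (1:Fin 7) 1 = 1 := rfl
@[simp] lemma fmax_1_2 : max (1:Fin 7) 2 = 2 := rfl
@[simp] lemma fmax_1_3 : max (1:Fin 7) 3 = 3 := rfl
@[simp] lemma fmax_1_4 : max (1:Fin 7) 4 = 4 := rfl
@[simp] lemma fmax_1_5 : max (1:Fin 7) 5 = 5 := rfl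
@[simp] lemma fmax_1_6 : max (1:Fin 7) 6 = 6 := rfl
@[simp] lemma fmax_2_0 : max (2:Fin 7) 0 = 2 := rfl
@[simp] lemma fmax_2_1 : max (2:Fin 7) 1 = 2 := rfl
@[simp] lemma fmax_2_2 : max (2:Fin 7) 2 = 2 := rfl
@[simp] lemma fmax_2_3 : max (2:Fin 7) 3 = 3 := rfl
@[simp] lemma fmax_2_4 : max (2:Fin 7) 4 = 4 := rfl
@[simp] lemma fmax_2_5 : max (2:Fin 7) 5 = 5 := rfl
@[simp] lemma fmax_2_6 : max (2:Fin 7) 6 = 6 := rfl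
@[simp] lemma fmax_3_0 : max (3:Fin 7) 0 = 3 := rfl
@[simp] lemma fmax_3_1 : max (3:Fin 7) 1 = 3 := rfl
@[simp] lemma fmax_3_2 : max (3:Fin 7) 2 = 3 := rfl
@[simp] lemma fmax_3_3 : max (3:Fin 7) 3 = 3 := rfl
@[simp] lemma fmax_3_4 : max (3:Fin 7) 4 = 4 := rfl
@[simp] lemma fmax_3_5 : max (3:Fin 7) 5 = 5 := rfl
@[simp] lemma fmax_3_6 : max (3:Fin 7) 6 = 6 := rfl
@[simp] lemma fmax_4_0 : max (4:Fin 7) 0 = 4 := rfl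
@[simp] lemma fmax_4_1 : max (4:Fin 7) 1 = 4 := rfl
@[simp] lemma fmax_4_2 : max (4:Fin 7) 2 = 4 := rfl
@[simp] lemma fmax_4_3 : max (4:Fin 7) 3 = 4 := rfl
@[simp] lemma fmax_4_4 : max (4:Fin 7) 4 = 4 := rfl
@[simp] lemma fmax_4_5 : max (4:Fin 7) 5 = 5 := rfl
@[simp] lemma fmax_4_6 : max (4:Fin 7) 6 = 6 := rfl
@[simp] lemma fmax_5_0 : max (5:Fin 7) 0 = 5 := rfl
@[simp] lemma fmax_5_1 : max (5:Fin 7) 1 = 5 := rfl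
@[simp] lemma fmax_5_2 : max (5:Fin 7) 2 = 5 := rfl
@[simp] lemma fmax_5_3 : max (5:Fin 7) 3 = 5 := rfl
@[simp] lemma fmax_5_4 : max (5:Fin 7) 4 = 5 := rfl
@[simp] lemma fmax_5_5 : max (5:Fin 7) 5 = 5 := rfl
@[simp] lemma fmax_5_6 : max (5:Fin 7) 6 = 6 := rfl
@[simp] lemma fmax_6_0 : max (6:Fin 7) 0 = 6 := rfl
@[simp] lemma fmax_6_1 : max (6:Fin 7) 1 = 6 := rfl
@[simp] lemma fmax_6_2 : max (6:Fin 7) 2 = 6 := rfl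
@[simp] lemma fmax_6_3 : max (6:Fin 7) 3 = 6 := rfl
@[simp] lemma fmax_6_4 : max (6:Fin 7) 4 = 6 := rfl
@[simp] lemma fmax_6_5 : max (6:Fin 7) 5 = 6 := rfl
@[simp] lemma fmax_6_6 : max (6:Fin 7) 6 = 6 := rfl

lemma sum_lie' {g : Type*} [LieRing g] {ι : Type*} (s : Finset ι) (f : ι → g) (y : g) :
    ⁅∑ i ∈ s, f i, y⁆ = ∑ i ∈ s, ⁅f i, y⁆ := by
  induction s using Finset.cons_induction with
  | empty => simp
  | cons i s hi ih => simp [Finset.sum_cons, add_lie, ih]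

lemma lie_sum' {g : Type*} [LieRing g] {ι : Type*} (s : Finset ι) (f : ι → g) (y : g) :
    ⁅y, ∑ i ∈ s, f i⁆ = ∑ i ∈ s, ⁅y, f i⁆ := by
  induction s using Finset.cons_induction with
  | empty => simp
  | cons i s hi ih => simp [Finset.sum_cons, lie_add, ih]

set_option maxHeartbeats 1600000 in

/-- the 7-dimensional Lie algebra with the indicated structure constants
has index one but is not contact. -/
theorem stmt11 (g : Type) [LieRing g] [LieAlgebra ℂ g]
    (e : Module.Basis (Fin 7) ℂ g)
    (h14 : ⁅e 0, e 3⁆ = (2 : ℂ) • e 3)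
    (h24 : ⁅e 1, e 3⁆ = e 3)
    (h15 : ⁅e 0, e 4⁆ = e 4)
    (h25 : ⁅e 1, e 4⁆ = (2 : ℂ) • e 4)
    (h35 : ⁅e 2, e 4⁆ = e 4)
    (h16 : ⁅e 0, e 5⁆ = e 5)
    (h36 : ⁅e 2, e 5⁆ = e 5)
    (h27 : ⁅e 1, e 6⁆ = e 6)
    (h37 : ⁅e 2, e 6⁆ = (2 : ℂ) • e 6)
    (hzero : ∀ i j : Fin 7, i < j →
      (i, j) ∉ ({(0, 3), (1, 3), (0, 4), (1, 4), (2, 4), (0, 5), (2, 5), (1, 6), (2, 6)} :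
        Set (Fin 7 × Fin 7)) →
      ⁅e i, e j⁆ = 0) :
    lieIndex g = 1 ∧ ¬ IsContact g := by
  classical
  have hfd : FiniteDimensional ℂ g := Module.Finite.of_basis e
  have htab : ∀ i j : Fin 7, ⁅e i, e j⁆ = sC i j • e (max i j) := by
    intro i j
    fin_cases i <;> fin_cases j <;>
      first
        | exact (lie_self _).trans (zero_smul ℂ _).symm
        | exact (hzero _ _ (by decide) (by decide)).trans (zero_smul ℂ _).symm
        | exact h14 | exact h25 | exact h37
        | exact h24.trans (one_smul ℂ _).symm
        | exact h15.trans (one_smul ℂ _).symm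
        | exact h35.trans (one_smul ℂ _).symm
        | exact h16.trans (one_smul ℂ _).symm
        | exact h36.trans (one_smul ℂ _).symm
        | exact h27.trans (one_smul ℂ _).symm
        | (rw [← lie_skew]
           first
             | exact (neg_inj.mpr (hzero _ _ (by decide) (by decide))).trans
                 (neg_zero.trans (zero_smul ℂ _).symm)
             | exact (neg_inj.mpr h14).trans (neg_smul _ _).symm
             | exact (neg_inj.mpr h25).trans (neg_smul _ _).symm
             | exact (neg_inj.mpr h37).trans (neg_smul _ _).symm
             | exact (neg_inj.mpr h24).trans (neg_one_smul ℂ _).symm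
             | exact (neg_inj.mpr h15).trans (neg_one_smul ℂ _).symm
             | exact (neg_inj.mpr h35).trans (neg_one_smul ℂ _).symm
             | exact (neg_inj.mpr h16).trans (neg_one_smul ℂ _).symm
             | exact (neg_inj.mpr h36).trans (neg_one_smul ℂ _).symm
             | exact (neg_inj.mpr h27).trans (neg_one_smul ℂ _).symm)
  have hbr : ∀ (φ : Module.Dual ℂ g) (x : g) (j : Fin 7),
      φ ⁅x, e j⁆ = ∑ i, e.repr x i * (sC i j * φ (e (max i j))) := by
    intro φ x j
    conv_lhs => rw [← Module.Basis.sum_repr e x]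
    rw [sum_lie', map_sum]
    refine Finset.sum_congr rfl fun i _ => ?_
    rw [smul_lie, htab i j]
    simp [_root_.map_smul, smul_eq_mul]
  have hky : ∀ (φ : Module.Dual ℂ g) (x : g), (∀ j, φ ⁅x, e j⁆ = 0) → ∀ y, φ ⁅x, y⁆ = 0 := by
    intro φ x h y
    conv_lhs => rw [← Module.Basis.sum_repr e y]
    rw [lie_sum', map_sum]
    exact Finset.sum_eq_zero fun j _ => by rw [lie_smul, _root_.map_smul, h j, smul_zero]
  have hexist : ∀ φ : Module.Dual ℂ g, ∃ x : g, x ≠ 0 ∧ φ x = 0 ∧ ∀ y, φ ⁅x, y⁆ = 0 := by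
    intro φ
    have hbv : ∀ k : Fin 7, (3:Fin 7) ≤ k → φ (e k) = 0 →
        ∃ x : g, x ≠ 0 ∧ φ x = 0 ∧ ∀ y, φ ⁅x, y⁆ = 0 := by
      intro k hk3 hk
      refine ⟨e k, e.ne_zero k, hk, hky φ _ fun j => ?_⟩
      rw [hbr]
      fin_cases k <;>
        first
          | exact absurd hk3 (by decide)
          | (fin_cases j <;>
              · simp [Fin.sum_univ_seven, Module.Basis.repr_self, Finsupp.single_apply]
                try exact hk)
    by_cases h3 : φ (e 3) = 0
    · exact hbv 3 (by decide) h3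
    by_cases h4 : φ (e 4) = 0
    · exact hbv 4 (by decide) h4
    by_cases h5 : φ (e 5) = 0
    · exact hbv 5 (by decide) h5
    by_cases h6 : φ (e 6) = 0
    · exact hbv 6 (by decide) h6
    set xA : g := (φ (e 4) * φ (e 5) * φ (e 6)) • e 3 - (φ (e 3) * φ (e 5) * φ (e 6)) • e 4
        - (φ (e 3) * φ (e 4) * φ (e 6)) • e 5 + (φ (e 3) * φ (e 4) * φ (e 5)) • e 6 with hxA
    have hr0 : e.repr xA 0 = 0 := by
      rw [hxA]; simp [Module.Basis.repr_self, Finsupp.single_apply]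
    have hr1 : e.repr xA 1 = 0 := by
      rw [hxA]; simp [Module.Basis.repr_self, Finsupp.single_apply]
    have hr2 : e.repr xA 2 = 0 := by
      rw [hxA]; simp [Module.Basis.repr_self, Finsupp.single_apply]
    have hr3 : e.repr xA 3 = φ (e 4) * φ (e 5) * φ (e 6) := by
      rw [hxA]; simp [Module.Basis.repr_self, Finsupp.single_apply]
    have hr4 : e.repr xA 4 = -(φ (e 3) * φ (e 5) * φ (e 6)) := by
      rw [hxA]; simp [Module.Basis.repr_self, Finsupp.single_apply]
    have hr5 : e.repr xA 5 = -(φ (e 3) * φ (e 4) * φ (e 6)) := by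
      rw [hxA]; simp [Module.Basis.repr_self, Finsupp.single_apply]
    have hr6 : e.repr xA 6 = φ (e 3) * φ (e 4) * φ (e 5) := by
      rw [hxA]; simp [Module.Basis.repr_self, Finsupp.single_apply]
    refine ⟨xA, ?_, ?_, hky φ _ fun j => ?_⟩
    · intro hx
      rw [hx] at hr3
      simp only [map_zero, Finsupp.coe_zero, Pi.zero_apply] at hr3
      rcases mul_eq_zero.mp hr3.symm with h | h
      · rcases mul_eq_zero.mp h with h' | h'
        exacts [h4 h', h5 h']
      · exact h6 h
    · rw [hxA]
      simp only [map_sub, map_add, _root_.map_smul, smul_eq_mul]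
      ring
    · rw [hbr, Fin.sum_univ_seven, hr0, hr1, hr2, hr3, hr4, hr5, hr6]
      fin_cases j <;>
        · simp
          try ring
  constructor
  · -- index = 1
    have h1mem : ∃ φ : Module.Dual ℂ g, Module.finrank ℂ (kerB φ) = 1 := by
      refine ⟨e.coord 3 + e.coord 4 + e.coord 5 + e.coord 6, ?_⟩
      set φ1 : Module.Dual ℂ g := e.coord 3 + e.coord 4 + e.coord 5 + e.coord 6 with hφ1
      have pv0 : φ1 (e 0) = 0 := by
        rw [hφ1]; simp [Module.Basis.coord_apply, Module.Basis.repr_self, Finsupp.single_apply]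
      have pv1 : φ1 (e 1) = 0 := by
        rw [hφ1]; simp [Module.Basis.coord_apply, Module.Basis.repr_self, Finsupp.single_apply]
      have pv2 : φ1 (e 2) = 0 := by
        rw [hφ1]; simp [Module.Basis.coord_apply, Module.Basis.repr_self, Finsupp.single_apply]
      have pv3 : φ1 (e 3) = 1 := by
        rw [hφ1]; simp [Module.Basis.coord_apply, Module.Basis.repr_self, Finsupp.single_apply]
      have pv4 : φ1 (e 4) = 1 := by
        rw [hφ1]; simp [Module.Basis.coord_apply, Module.Basis.repr_self, Finsupp.single_apply]
      have pv5 : φ1 (e 5) = 1 := by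
        rw [hφ1]; simp [Module.Basis.coord_apply, Module.Basis.repr_self, Finsupp.single_apply]
      have pv6 : φ1 (e 6) = 1 := by
        rw [hφ1]; simp [Module.Basis.coord_apply, Module.Basis.repr_self, Finsupp.single_apply]
      have hx0ne : e 3 - e 4 - e 5 + e 6 ≠ (0 : g) := by
        intro h
        have h' := congrArg (fun z => e.repr z 3) h
        simp [Module.Basis.repr_self, Finsupp.single_apply] at h'
      have hsp : kerB φ1 = Submodule.span ℂ {e 3 - e 4 - e 5 + e 6} := by
        apply le_antisymm
        · intro x hx
          have hx' : ∀ y, φ1 ⁅x, y⁆ = 0 := hx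
          have m0 := hx' (e 0); have m1 := hx' (e 1); have m2 := hx' (e 2)
          have m3 := hx' (e 3); have m4 := hx' (e 4); have m5 := hx' (e 5)
          have m6 := hx' (e 6)
          rw [hbr, Fin.sum_univ_seven] at m0 m1 m2 m3 m4 m5 m6
          simp only [sC_0_0, sC_0_1, sC_0_2, sC_0_3, sC_0_4, sC_0_5, sC_0_6,
            sC_1_0, sC_1_1, sC_1_2, sC_1_3, sC_1_4, sC_1_5, sC_1_6,
            sC_2_0, sC_2_1, sC_2_2, sC_2_3, sC_2_4, sC_2_5, sC_2_6,
            sC_3_0, sC_3_1, sC_3_2, sC_3_3, sC_3_4, sC_3_5, sC_3_6,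
            sC_4_0, sC_4_1, sC_4_2, sC_4_3, sC_4_4, sC_4_5, sC_4_6,
            sC_5_0, sC_5_1, sC_5_2, sC_5_3, sC_5_4, sC_5_5, sC_5_6,
            sC_6_0, sC_6_1, sC_6_2, sC_6_3, sC_6_4, sC_6_5, sC_6_6,
            fmax_0_0, fmax_0_1, fmax_0_2, fmax_0_3, fmax_0_4, fmax_0_5, fmax_0_6,
            fmax_1_0, fmax_1_1, fmax_1_2, fmax_1_3, fmax_1_4, fmax_1_5, fmax_1_6,
            fmax_2_0, fmax_2_1, fmax_2_2, fmax_2_3, fmax_2_4, fmax_2_5, fmax_2_6,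
            fmax_3_0, fmax_3_1, fmax_3_2, fmax_3_3, fmax_3_4, fmax_3_5, fmax_3_6,
            fmax_4_0, fmax_4_1, fmax_4_2, fmax_4_3, fmax_4_4, fmax_4_5, fmax_4_6,
            fmax_5_0, fmax_5_1, fmax_5_2, fmax_5_3, fmax_5_4, fmax_5_5, fmax_5_6,
            fmax_6_0, fmax_6_1, fmax_6_2, fmax_6_3, fmax_6_4, fmax_6_5, fmax_6_6,
            pv0, pv1, pv2, pv3, pv4, pv5, pv6, mul_zero, zero_mul, mul_one,
            add_zero, zero_add] at m0 m1 m2 m3 m4 m5 m6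
          have hc0 : e.repr x 0 = 0 := by
            linear_combination (1/4)*m3 + (1/2)*m5 - (1/4)*m6
          have hc1 : e.repr x 1 = 0 := by
            linear_combination (1/2)*m3 - m5 + (1/2)*m6
          have hc2 : e.repr x 2 = 0 := by
            linear_combination (-(1/4))*m3 + (1/2)*m5 + (1/4)*m6
          have hc4 : e.repr x 4 = -e.repr x 3 := by
            linear_combination (-(1/4))*m0 - (1/2)*m1 + (1/4)*m2
          have hc5 : e.repr x 5 = -e.repr x 3 := by
            linear_combination (-(3/4))*m0 + (1/2)*m1 - (1/4)*m2
          have hc6 : e.repr x 6 = e.repr x 3 := by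
            linear_combination (1/2)*m0 - (1/2)*m2
          rw [Submodule.mem_span_singleton]
          refine ⟨e.repr x 3, ?_⟩
          conv_rhs => rw [← Module.Basis.sum_repr e x]
          rw [Fin.sum_univ_seven, hc0, hc1, hc2, hc4, hc5, hc6]
          module
        · rw [Submodule.span_le, Set.singleton_subset_iff]
          have hq0 : e.repr (e 3 - e 4 - e 5 + e 6) 0 = 0 := by
            simp [Module.Basis.repr_self, Finsupp.single_apply]
          have hq1 : e.repr (e 3 - e 4 - e 5 + e 6) 1 = 0 := by
            simp [Module.Basis.repr_self, Finsupp.single_apply]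
          have hq2 : e.repr (e 3 - e 4 - e 5 + e 6) 2 = 0 := by
            simp [Module.Basis.repr_self, Finsupp.single_apply]
          have hq3 : e.repr (e 3 - e 4 - e 5 + e 6) 3 = 1 := by
            simp [Module.Basis.repr_self, Finsupp.single_apply]
          have hq4 : e.repr (e 3 - e 4 - e 5 + e 6) 4 = -1 := by
            simp [Module.Basis.repr_self, Finsupp.single_apply]
          have hq5 : e.repr (e 3 - e 4 - e 5 + e 6) 5 = -1 := by
            simp [Module.Basis.repr_self, Finsupp.single_apply]
          have hq6 : e.repr (e 3 - e 4 - e 5 + e 6) 6 = 1 := by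
            simp [Module.Basis.repr_self, Finsupp.single_apply]
          show ∀ y, φ1 ⁅e 3 - e 4 - e 5 + e 6, y⁆ = 0
          refine hky φ1 _ fun j => ?_
          rw [hbr, Fin.sum_univ_seven, hq0, hq1, hq2, hq3, hq4, hq5, hq6]
          fin_cases j <;>
            · simp [pv0, pv1, pv2, pv3, pv4, pv5, pv6]
              try ring
      rw [hsp]
      exact finrank_span_singleton hx0ne
    have h0not : ∀ φ : Module.Dual ℂ g, Module.finrank ℂ (kerB φ) ≠ 0 := by
      intro φ h
      obtain ⟨x, hx0, -, hxy⟩ := hexist φ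
      have hbot : kerB φ = ⊥ := Submodule.finrank_eq_zero.mp h
      have hmem : x ∈ kerB φ := hxy
      rw [hbot, Submodule.mem_bot] at hmem
      exact hx0 hmem
    unfold lieIndex
    refine le_antisymm (Nat.sInf_le h1mem) ?_
    obtain ⟨φ, hφ⟩ := Nat.sInf_mem (⟨1, h1mem⟩ :
      Set.Nonempty {d | ∃ φ : Module.Dual ℂ g, Module.finrank ℂ (kerB φ) = d})
    exact Nat.one_le_iff_ne_zero.mpr fun h => h0not φ (hφ.trans h)
  · -- not contact
    rintro ⟨φ, k, E, hdet⟩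
    obtain ⟨x, hx0, hφx, hxy⟩ := hexist φ
    apply hdet
    rw [← Matrix.exists_mulVec_eq_zero_iff]
    have hB00 : hatB (⇑E) φ 0 0 = 0 := rfl
    have hB0 : ∀ j, hatB (⇑E) φ 0 j.succ = φ (E j) := fun j => by
      simp [hatB]
    have hBi0 : ∀ i, hatB (⇑E) φ i.succ 0 = -φ (E i) := fun i => by
      simp [hatB]
    have hBij : ∀ i j, hatB (⇑E) φ i.succ j.succ = φ ⁅E i, E j⁆ := fun i j => by
      simp [hatB]
    set v : Fin (2*k+1+1) → ℂ := Fin.cons (0:ℂ) (fun j => E.repr x j) with hvdef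
    refine ⟨v, ?_, ?_⟩
    · intro hv
      apply hx0
      have hr : E.repr x = 0 := by
        ext j
        have := congrFun hv j.succ
        simpa [hvdef, Fin.cons_succ] using this
      exact (LinearEquiv.map_eq_zero_iff E.repr).mp hr
    · funext i
      have hmv : ((hatB (⇑E) φ).mulVec v) i = ∑ j, hatB (⇑E) φ i j * v j := rfl
      rw [hmv, Pi.zero_apply]
      induction i using Fin.cases with
      | zero =>
        rw [Fin.sum_univ_succ, hB00]
        rw [show v 0 = 0 from rfl, mul_zero, zero_add]
        have hsum : ∑ j : Fin (2*k+1), hatB (⇑E) φ 0 j.succ * v j.succ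
            = φ x := by
          calc ∑ j : Fin (2*k+1), hatB (⇑E) φ 0 j.succ * v j.succ
              = ∑ j, φ (E.repr x j • E j) := by
                refine Finset.sum_congr rfl fun j _ => ?_
                rw [hB0, show v j.succ = E.repr x j from rfl, _root_.map_smul,
                  smul_eq_mul, mul_comm]
            _ = φ (∑ j, E.repr x j • E j) := (map_sum φ _ _).symm
            _ = φ x := by rw [Module.Basis.sum_repr]
        rw [hsum, hφx]
      | succ i =>
        rw [Fin.sum_univ_succ, hBi0]
        rw [show v 0 = 0 from rfl, mul_zero, zero_add]
        have hsum : ∑ j : Fin (2*k+1), hatB (⇑E) φ i.succ j.succ * v j.succ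
            = φ ⁅E i, x⁆ := by
          calc ∑ j : Fin (2*k+1), hatB (⇑E) φ i.succ j.succ * v j.succ
              = ∑ j, φ ⁅E i, E.repr x j • E j⁆ := by
                refine Finset.sum_congr rfl fun j _ => ?_
                rw [hBij, show v j.succ = E.repr x j from rfl, lie_smul, _root_.map_smul,
                  smul_eq_mul, mul_comm]
            _ = φ ⁅E i, ∑ j, E.repr x j • E j⁆ := by rw [lie_sum', map_sum]
            _ = φ ⁅E i, x⁆ := by rw [Module.Basis.sum_repr]
        rw [hsum, ← lie_skew, map_neg, hxy, neg_zero]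
end

section
/- Let g be a complex Lie algebra of odd dimension 2k+1 with ind g = 1, and let φ ∈ g* be a regular one-form, i.e., dim ker B_φ = 1. If L spans ker B_φ and φ(L) ≠ 0, then det(\widehat{B}_φ) = φ(L)^2 · det(B'_φ) ≠ 0, where B'_φ is the matrix of B_φ in a basis containing L with the row and column corresponding to L removed; in particular, φ is a contact form and g is contact. -/
open Matrix

attribute [local instance 100] LieRing.ofAssociativeRing

section Aux

variable {g : Type} [LieRing g] [LieAlgebra ℂ g]

/-- The linear map `y ↦ φ ⁅a, y⁆`. -/
def lphi (φ : Module.Dual ℂ g) (a : g) : g →ₗ[ℂ] ℂ where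
  toFun y := φ ⁅a, y⁆
  map_add' x y := by simp
  map_smul' c x := by simp

/-- The linear map `y ↦ φ ⁅y, a⁆`. -/
def rphi (φ : Module.Dual ℂ g) (a : g) : g →ₗ[ℂ] ℂ where
  toFun y := φ ⁅y, a⁆
  map_add' x y := by simp [add_lie]
  map_smul' c x := by simp [smul_lie]

@[simp] lemma lphi_apply (φ : Module.Dual ℂ g) (a y : g) : lphi φ a y = φ ⁅a, y⁆ := rfl
@[simp] lemma rphi_apply (φ : Module.Dual ℂ g) (a y : g) : rphi φ a y = φ ⁅y, a⁆ := rfl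

@[simp] lemma hatB_zero_zero {m : ℕ} (E : Fin m → g) (φ : Module.Dual ℂ g) :
    hatB E φ 0 0 = 0 := rfl

@[simp] lemma hatB_zero_succ {m : ℕ} (E : Fin m → g) (φ : Module.Dual ℂ g) (j : Fin m) :
    hatB E φ 0 j.succ = φ (E j) := by simp [hatB]

@[simp] lemma hatB_succ_zero {m : ℕ} (E : Fin m → g) (φ : Module.Dual ℂ g) (i : Fin m) :
    hatB E φ i.succ 0 = -(φ (E i)) := by simp [hatB]

@[simp] lemma hatB_succ_succ {m : ℕ} (E : Fin m → g) (φ : Module.Dual ℂ g) (i j : Fin m) :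
    hatB E φ i.succ j.succ = φ ⁅E i, E j⁆ := by simp [hatB]

lemma hatB_det {m : ℕ} (E : Fin (m + 1) → g) (φ : Module.Dual ℂ g)
    (h1 : ∀ j, φ ⁅E 0, E j⁆ = 0) (h2 : ∀ i, φ ⁅E i, E 0⁆ = 0) :
    (hatB E φ).det =
      (φ (E 0)) ^ 2 * (Matrix.of fun i j : Fin m => φ ⁅E i.succ, E j.succ⁆).det := by
  have hone : (1 : Fin (m + 1 + 1)) = Fin.succ 0 := (Fin.succ_zero_eq_one' (n := m + 1)).symm
  rw [Matrix.det_succ_row (hatB E φ) 1, Fin.sum_univ_succ]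
  have hz : ∀ j : Fin (m + 1),
      (-1 : ℂ) ^ ((1 : Fin (m+1+1)) + j.succ : ℕ) * hatB E φ 1 j.succ *
        ((hatB E φ).submatrix (Fin.succAbove 1) (Fin.succAbove j.succ)).det = 0 := by
    intro j
    rw [hone, hatB_succ_succ, h1 j]
    ring
  rw [Finset.sum_eq_zero fun j _ => hz j, add_zero]
  rw [hone, hatB_succ_zero]
  set S := (hatB E φ).submatrix (Fin.succAbove (Fin.succ 0)) (Fin.succAbove 0) with hS
  have hScol : ∀ i : Fin m, S i.succ 0 = 0 := by
    intro i
    simp only [hS, Matrix.submatrix_apply, Fin.succ_succAbove_succ, Fin.zero_succAbove,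
      hatB_succ_succ]
    exact h2 i.succ
  have hS00 : S 0 0 = φ (E 0) := by
    simp only [hS, Matrix.submatrix_apply, Fin.succ_succAbove_zero, Fin.zero_succAbove,
      hatB_zero_succ]
  have hsub : S.submatrix (Fin.succAbove 0) Fin.succ =
      (Matrix.of fun i j : Fin m => φ ⁅E i.succ, E j.succ⁆) := by
    ext i j
    simp only [Matrix.submatrix_apply, hS, Fin.zero_succAbove, Fin.succ_succAbove_succ,
      hatB_succ_succ, Matrix.of_apply]
  have key : ∀ i : Fin (m + 1),
      (-1 : ℂ) ^ (i : ℕ) * S i 0 * (S.submatrix (Fin.succAbove i) Fin.succ).det =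
        if i = 0 then
          φ (E 0) * (Matrix.of fun i j : Fin m => φ ⁅E i.succ, E j.succ⁆).det else 0 := by
    intro i
    induction i using Fin.cases with
    | zero => rw [if_pos rfl, hS00, hsub]; simp
    | succ i => rw [if_neg (Fin.succ_ne_zero i), hScol i]; ring
  rw [Matrix.det_succ_column_zero S, Finset.sum_congr rfl fun i _ => key i,
    Finset.sum_ite_eq' Finset.univ (0 : Fin (m + 1))
      (fun _ => φ (E 0) * (Matrix.of fun i j : Fin m => φ ⁅E i.succ, E j.succ⁆).det)]
  simp only [Finset.mem_univ, if_true, Fin.val_succ, Fin.val_zero, add_zero, Fin.val_one]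
  ring

end Aux

/-- an odd-dimensional Lie algebra of index one with a regular one-form
`φ` whose Kirillov kernel is spanned by `L` with `φ(L) ≠ 0` is contact with contact
form `φ`; moreover, for any basis beginning with `L`, the determinant of `\widehat{B}_φ`
equals `φ(L)² · det(B'_φ)` and is nonzero. -/
theorem stmt12 (g : Type) [LieRing g] [LieAlgebra ℂ g]
    (k : ℕ) (hdim : Module.finrank ℂ g = 2 * k + 1)
    (hind : lieIndex g = 1)
    (φ : Module.Dual ℂ g)
    (hreg : Module.finrank ℂ (kerB φ) = 1)
    (L : g) (hker : (kerB φ : Submodule ℂ g) = Submodule.span ℂ {L})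
    (hφL : φ L ≠ 0) :
    (∀ E : Module.Basis (Fin (2 * k + 1)) ℂ g, E 0 = L →
      (hatB (⇑E) φ).det =
          (φ L) ^ 2 * (Matrix.of fun i j : Fin (2 * k) => φ ⁅E i.succ, E j.succ⁆).det ∧
        (hatB (⇑E) φ).det ≠ 0) ∧
    IsContactForm g φ ∧ IsContact g := by
    classical
  have hL0 : L ≠ 0 := fun h => hφL (by simp [h])
  have hfd : FiniteDimensional ℂ g := FiniteDimensional.of_finrank_pos (by omega)
  have hLker : L ∈ kerB φ := by
    rw [hker]; exact Submodule.mem_span_singleton_self L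
  have hLlie : ∀ y : g, φ ⁅L, y⁆ = 0 := hLker
  have hlieL : ∀ y : g, φ ⁅y, L⁆ = 0 := fun y => by
    rw [← lie_skew, map_neg, hLlie, neg_zero]
  have main : ∀ E : Module.Basis (Fin (2 * k + 1)) ℂ g, E 0 = L →
      (hatB (⇑E) φ).det =
          (φ L) ^ 2 * (Matrix.of fun i j : Fin (2 * k) => φ ⁅E i.succ, E j.succ⁆).det ∧
        (hatB (⇑E) φ).det ≠ 0 := by
    intro E hE0
    have h1 : ∀ j, φ ⁅E 0, E j⁆ = 0 := fun j => by rw [hE0]; exact hLlie _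
    have h2 : ∀ i, φ ⁅E i, E 0⁆ = 0 := fun i => by rw [hE0]; exact hlieL _
    have hdet := hatB_det (⇑E) φ h1 h2
    rw [hE0] at hdet
    have hBne : (Matrix.of fun i j : Fin (2 * k) => φ ⁅E i.succ, E j.succ⁆).det ≠ 0 := by
      intro hdet0
      obtain ⟨v, hv0, hv⟩ := Matrix.exists_mulVec_eq_zero_iff.mpr hdet0
      set x : g := ∑ j : Fin (2 * k), v j • E j.succ with hx
      have hx1 : ∀ i : Fin (2 * k), φ ⁅E i.succ, x⁆ = 0 := by
        intro i
        have hvi := congrFun hv i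
        simp only [Matrix.mulVec, dotProduct, Matrix.of_apply, Pi.zero_apply] at hvi
        calc φ ⁅E i.succ, x⁆ = lphi φ (E i.succ) x := rfl
          _ = ∑ j, v j • lphi φ (E i.succ) (E j.succ) := by
              rw [hx, map_sum]
              exact Finset.sum_congr rfl fun j _ => by rw [LinearMap.map_smul]
          _ = 0 := by
              rw [← hvi]
              exact Finset.sum_congr rfl fun j _ => by
                simp [lphi_apply, smul_eq_mul, mul_comm]
      have hrz : rphi φ x = 0 := by
        apply Module.Basis.ext E
        intro i
        induction i using Fin.cases with
        | zero => simp only [rphi_apply, LinearMap.zero_apply, hE0]; exact hLlie x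
        | succ i =>
          simp only [rphi_apply, LinearMap.zero_apply]
          exact hx1 i
      have hxker : x ∈ kerB φ := by
        intro y
        have hyx : φ ⁅y, x⁆ = 0 := DFunLike.congr_fun hrz y
        rw [← lie_skew, map_neg, hyx, neg_zero]
      rw [hker] at hxker
      obtain ⟨c, hc⟩ := Submodule.mem_span_singleton.mp hxker
      set c' : Fin (2 * k + 1) → ℂ := Fin.cons (-c) v with hc'
      have hsum : ∑ i, c' i • E i = 0 := by
        rw [Fin.sum_univ_succ]
        simp only [hc', Fin.cons_zero, Fin.cons_succ, hE0]
        rw [← hx, neg_smul, hc, neg_add_cancel]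
      have hall := Fintype.linearIndependent_iff.mp E.linearIndependent c' hsum
      apply hv0
      funext j
      have := hall j.succ
      simpa [hc'] using this
    exact ⟨hdet, hdet ▸ mul_ne_zero (pow_ne_zero _ hφL) hBne⟩
  obtain ⟨W, hW⟩ := Submodule.exists_isCompl (Submodule.span ℂ {L})
  have hWrank : Module.finrank ℂ W = 2 * k := by
    have h := Submodule.finrank_add_eq_of_isCompl hW
    rw [finrank_span_singleton hL0, hdim] at h
    omega
  have bW : Module.Basis (Fin (2 * k)) ℂ W := Module.finBasisOfFinrankEq ℂ W hWrank
  have hli : ∀ c : ℂ, ∀ x ∈ W, c • L + x = 0 → c = 0 := by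
    intro c x hxW hsum
    have h1 : c • L = -x := eq_neg_of_add_eq_zero_left hsum
    have h2 : c • L ∈ W := h1 ▸ W.neg_mem hxW
    have h3 : c • L ∈ Submodule.span ℂ {L} ⊓ W :=
      ⟨Submodule.smul_mem _ c (Submodule.mem_span_singleton_self L), h2⟩
    rw [hW.inf_eq_bot, Submodule.mem_bot] at h3
    rcases smul_eq_zero.mp h3 with h | h
    · exact h
    · exact absurd h hL0
  have hsp : ∀ z : g, ∃ c : ℂ, z + c • L ∈ W := by
    intro z
    have hz : z ∈ Submodule.span ℂ {L} ⊔ W := by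
      rw [hW.sup_eq_top]; trivial
    obtain ⟨a, ha, b, hb, hab⟩ := Submodule.mem_sup.mp hz
    obtain ⟨d, hd⟩ := Submodule.mem_span_singleton.mp ha
    refine ⟨-d, ?_⟩
    have : z + (-d) • L = b := by rw [← hab, ← hd, neg_smul]; abel
    rw [this]; exact hb
  set E' : Module.Basis (Fin (2 * k + 1)) ℂ g := Module.Basis.mkFinCons L bW hli hsp with hE'
  have hE'0 : E' 0 = L := by
    have h := Module.Basis.coe_mkFinCons L bW hli hsp
    calc E' 0 = (Fin.cons L ((↑) ∘ ⇑bW) : Fin (2 * k + 1) → g) 0 := by rw [hE', h]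
      _ = L := Fin.cons_zero _ _
  exact ⟨main, ⟨k, E', (main E' hE'0).2⟩, φ, k, E', (main E' hE'0).2⟩
end
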